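/- arXiv:2008.02464 — 3 statements merged into one kernel-verified Lean document; each statement's English description precedes it below -/
import Mathlib

section
/- Let P be a regular Markov chain on state space [N] with stationary distribution π and spectral expansion λ. Let m ≥ 1, ℓ ≥ 0, t > 0, and let H_1,…,H_N ∈ ℂ^{m×m} satisfy ‖H_i‖₂ ≤ ℓ for all i and Σ_{i∈[N]} π_i H_i = 0. Let E ∈ ℂ^{Nm×Nm} be the block-diagonal matrix with i-th diagonal block exp(tH_i), and let P̃ := P ⊗ I_m. Then for every z ∈ ℂ^{Nm}, ‖( P̃ᵀ E* z^⊥ )^⊥‖_π ≤ λ·exp(tℓ)·‖z^⊥‖_π. -/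
open scoped BigOperators Kronecker ComplexOrder
open Matrix

/-- A (row-stochastic) Markov chain on a finite state space: nonnegative entries, rows sum to 1. -/
def IsMarkov {S : Type*} [Fintype S] (P : Matrix S S ℝ) : Prop :=
  (∀ i j, 0 ≤ P i j) ∧ ∀ i, ∑ j, P i j = 1

/-- A Markov chain is regular if some positive power has all entries strictly positive. -/
def IsRegularMC {S : Type*} [Fintype S] [DecidableEq S] (P : Matrix S S ℝ) : Prop :=
  ∃ k : ℕ, 0 < k ∧ ∀ i j, 0 < (P ^ k) i j

/-- `π` is a stationary distribution of `P`: strictly positive entries, sums to 1, `πᵀ P = πᵀ`. -/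
def IsStationaryMC {S : Type*} [Fintype S] (P : Matrix S S ℝ) (π : S → ℝ) : Prop :=
  (∀ i, 0 < π i) ∧ (∑ i, π i = 1) ∧ ∀ j, ∑ i, π i * P i j = π j

/-- A probability vector. -/
def IsProbVec {S : Type*} [Fintype S] (φ : S → ℝ) : Prop :=
  (∀ i, 0 ≤ φ i) ∧ ∑ i, φ i = 1

/-- The `π`-norm of a real vector `φ`: `‖φ‖_π = sqrt (∑ i, φ i ^ 2 / π i)`. -/
noncomputable def piNormR {S : Type*} [Fintype S] (π φ : S → ℝ) : ℝ :=
  Real.sqrt (∑ i, φ i ^ 2 / π i)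

/-- The `π`-inner product `⟨x, y⟩_π = y* Π⁻¹ x` on `ℂ^S`. -/
noncomputable def piInner {S : Type*} [Fintype S] (π : S → ℝ) (x y : S → ℂ) : ℂ :=
  ∑ i, (starRingEnd ℂ) (y i) * x i / (π i : ℂ)

/-- The `π`-norm of a complex vector. -/
noncomputable def piNorm {S : Type*} [Fintype S] (π : S → ℝ) (x : S → ℂ) : ℝ :=
  Real.sqrt (∑ i, ‖x i‖ ^ 2 / π i)

/-- The spectral expansion `λ(P)`: the supremum of `‖Pᵀ x‖_π / ‖x‖_π` over nonzero `x`
with `⟨x, π⟩_π = 0`. -/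
noncomputable def specExp {S : Type*} [Fintype S] (P : Matrix S S ℝ) (π : S → ℝ) : ℝ :=
  sSup {r : ℝ | ∃ x : S → ℂ, x ≠ 0 ∧ piInner π x (fun i => (π i : ℂ)) = 0 ∧
    r = piNorm π ((P.map Complex.ofReal)ᵀ *ᵥ x) / piNorm π x}

/-- The spectral (operator 2-)norm of a matrix. -/
noncomputable def matSpectralNorm {𝕜 : Type*} [RCLike 𝕜] {m n : Type*} [Fintype m] [Fintype n]
    (A : Matrix m n 𝕜) : ℝ :=
  sSup {r : ℝ | ∃ x : n → 𝕜, x ≠ 0 ∧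
    r = Real.sqrt (∑ i, ‖(A *ᵥ x) i‖ ^ 2) / Real.sqrt (∑ j, ‖x j‖ ^ 2)}

/-- The probability that a `k`-step random walk on `P` started from `φ` follows the
trajectory `v`, i.e. `φ (v 1) * ∏ j, P (v j) (v (j+1))`. -/
noncomputable def walkWeight {S : Type*} [Fintype S] (P : Matrix S S ℝ) (φ : S → ℝ)
    {k : ℕ} (v : Fin k → S) : ℝ :=
  if h : 0 < k then
    φ (v ⟨0, h⟩) * ∏ j : Fin (k - 1),
      P (v ⟨(j : ℕ), by have := j.isLt; omega⟩) (v ⟨(j : ℕ) + 1, by have := j.isLt; omega⟩)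
  else 0

/-- The probability of an event `E` under a `k`-step random walk on `P` started from `φ`. -/
noncomputable def walkProb {S : Type*} [Fintype S] (P : Matrix S S ℝ) (φ : S → ℝ)
    {k : ℕ} (E : Set (Fin k → S)) : ℝ :=
  ∑ v : Fin k → S, E.indicator (fun u => walkWeight P φ u) v

/-- The matrix exponential, `exp A = ∑ A^k / k!`. -/
noncomputable def mexp {m : Type*} [Fintype m] [DecidableEq m]
    (A : Matrix m m ℂ) : Matrix m m ℂ :=
  ∑' k : ℕ, ((k.factorial : ℂ)⁻¹) • A ^ k

/-- The block-diagonal matrix `diag (M 1, …, M N)`. -/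
def blockDiag' {S m : Type*} [DecidableEq S] (M : S → Matrix m m ℂ) :
    Matrix (S × m) (S × m) ℂ :=
  Matrix.of fun p q => if p.1 = q.1 then M p.1 p.2 q.2 else 0

/-- The `π`-inner product `⟨x, y⟩_π = y* (Π⁻¹ ⊗ I_m) x` on `ℂ^{N m}`. -/
noncomputable def piInnerKron {N m : ℕ} (π : Fin N → ℝ) (x y : Fin N × Fin m → ℂ) : ℂ :=
  ∑ p, (starRingEnd ℂ) (y p) * x p / (π p.1 : ℂ)

/-- The `π`-norm on `ℂ^{N m}`. -/
noncomputable def piNormKron {N m : ℕ} (π : Fin N → ℝ) (x : Fin N × Fin m → ℂ) : ℝ :=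
  Real.sqrt (∑ p, ‖x p‖ ^ 2 / π p.1)

/-- Membership in the subspace `U = {π ⊗ w : w ∈ ℂ^m}`. -/
def memU {N m : ℕ} (π : Fin N → ℝ) (x : Fin N × Fin m → ℂ) : Prop :=
  ∃ w : Fin m → ℂ, ∀ p, x p = (π p.1 : ℂ) * w p.2

/-- `π`-orthogonality to the subspace `U = {π ⊗ w : w ∈ ℂ^m}`. -/
noncomputable def perpU {N m : ℕ} (π : Fin N → ℝ) (x : Fin N × Fin m → ℂ) : Prop :=
  ∀ w : Fin m → ℂ, piInnerKron π x (fun p => (π p.1 : ℂ) * w p.2) = 0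


section AuxCE

lemma aux_memU_sub {N m : ℕ} {π : Fin N → ℝ} {b u : Fin N × Fin m → ℂ}
    (hb : memU π b) (hu : memU π u) : memU π (b - u) := by
  obtain ⟨w1, h1⟩ := hb; obtain ⟨w2, h2⟩ := hu
  exact ⟨w1 - w2, fun p => by simp [h1 p, h2 p]; ring⟩

lemma aux_perp_norm_le {N m : ℕ} {π : Fin N → ℝ} (hπ : ∀ i, 0 < π i)
    {a b c : Fin N × Fin m → ℂ} (hdec : a = b + c) (hb : memU π b) (hc : perpU π c) :
    piNormKron π c ≤ piNormKron π a := by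
  obtain ⟨w, hw⟩ := hb
  have hcross : ∑ p, (b p * (starRingEnd ℂ) (c p)).re / π p.1 = 0 := by
    have h0 := hc w
    have : ∑ p, b p * (starRingEnd ℂ) (c p) / (π p.1 : ℂ)
        = (starRingEnd ℂ) (piInnerKron π c (fun p => (π p.1 : ℂ) * w p.2)) := by
      rw [piInnerKron, map_sum]
      refine Finset.sum_congr rfl fun p _ => ?_
      simp only [hw p, map_div₀, _root_.map_mul, Complex.conj_ofReal, RingHomCompTriple.comp_apply,
        RingHom.id_apply, starRingEnd_self_apply]
    have hz : ∑ p, b p * (starRingEnd ℂ) (c p) / (π p.1 : ℂ) = 0 := by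
      rw [this, h0, map_zero]
    calc ∑ p, (b p * (starRingEnd ℂ) (c p)).re / π p.1
        = (∑ p, b p * (starRingEnd ℂ) (c p) / (π p.1 : ℂ)).re := by
          rw [Complex.re_sum]
          exact Finset.sum_congr rfl fun p _ => (Complex.div_ofReal_re _ _).symm
      _ = 0 := by rw [hz]; rfl
  have key : ∑ p, ‖a p‖ ^ 2 / π p.1
      = (∑ p, ‖b p‖ ^ 2 / π p.1) + ∑ p, ‖c p‖ ^ 2 / π p.1 := by
    have : ∀ p : Fin N × Fin m, ‖a p‖ ^ 2 / π p.1
        = ‖b p‖ ^ 2 / π p.1 + ‖c p‖ ^ 2 / π p.1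
          + 2 * ((b p * (starRingEnd ℂ) (c p)).re / π p.1) := by
      intro p
      have : ‖a p‖ ^ 2 = ‖b p‖ ^ 2 + ‖c p‖ ^ 2 + 2 * (b p * (starRingEnd ℂ) (c p)).re := by
        have hn : ∀ z : ℂ, ‖z‖ ^ 2 = Complex.normSq z := fun z => by
          rw [Complex.sq_norm]
        rw [hdec]
        simp only [Pi.add_apply]
        rw [hn, hn, hn, Complex.normSq_add]
      rw [this]; ring
    rw [Finset.sum_congr rfl fun p _ => this p]
    rw [Finset.sum_add_distrib, Finset.sum_add_distrib, ← Finset.mul_sum, hcross]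
    ring
  have hb2 : 0 ≤ ∑ p : Fin N × Fin m, ‖b p‖ ^ 2 / π p.1 :=
    Finset.sum_nonneg fun p _ => div_nonneg (sq_nonneg _) (hπ _).le
  apply Real.sqrt_le_sqrt
  rw [key]; linarith

lemma aux_piNorm_pos {N : ℕ} {π : Fin N → ℝ} (hπ : ∀ i, 0 < π i) {x : Fin N → ℂ}
    (hx : x ≠ 0) : 0 < piNorm π x := by
  rw [piNorm, Real.sqrt_pos]
  obtain ⟨i, hi⟩ : ∃ i, x i ≠ 0 := by
    by_contra h; push_neg at h; exact hx (funext h)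
  refine Finset.sum_pos' (fun j _ => div_nonneg (sq_nonneg _) (hπ j).le)
    ⟨i, Finset.mem_univ i, ?_⟩
  exact div_pos (pow_pos (norm_pos_iff.mpr hi) 2) (hπ i)

lemma aux_Pnorm_crude {N : ℕ} {P : Matrix (Fin N) (Fin N) ℝ} {π : Fin N → ℝ}
    (hπ : ∀ i, 0 < π i) (hπ1 : ∀ i, π i ≤ 1)
    (hPnn : ∀ i j, 0 ≤ P i j) (hP1 : ∀ i j, P i j ≤ 1) (x : Fin N → ℂ) :
    piNorm π ((P.map Complex.ofReal)ᵀ *ᵥ x) ≤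
      Real.sqrt ((N : ℝ) * ∑ j, (π j)⁻¹) * piNorm π x := by
  have hQx : ∀ i, ‖x i‖ ^ 2 ≤ ‖x i‖ ^ 2 / π i := fun i => by
    rw [le_div_iff₀ (hπ i)]
    nlinarith [sq_nonneg (‖x i‖), hπ1 i, (hπ i).le]
  have hentry : ∀ j, ‖((P.map Complex.ofReal)ᵀ *ᵥ x) j‖ ^ 2 ≤ (N : ℝ) * ∑ i, ‖x i‖ ^ 2 := by
    intro j
    have h1 : ‖((P.map Complex.ofReal)ᵀ *ᵥ x) j‖ ≤ ∑ i, ‖x i‖ := by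
      rw [mulVec, dotProduct]
      refine (norm_sum_le _ _).trans (Finset.sum_le_sum fun i _ => ?_)
      simp only [transpose_apply, map_apply]
      rw [norm_mul, Complex.norm_real, Real.norm_eq_abs, abs_of_nonneg (hPnn i j)]
      calc P i j * ‖x i‖ ≤ 1 * ‖x i‖ :=
            mul_le_mul_of_nonneg_right (hP1 i j) (norm_nonneg _)
        _ = ‖x i‖ := one_mul _
    calc ‖((P.map Complex.ofReal)ᵀ *ᵥ x) j‖ ^ 2 ≤ (∑ i, ‖x i‖) ^ 2 := by
          have := norm_nonneg (((P.map Complex.ofReal)ᵀ *ᵥ x) j)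
          nlinarith [Finset.sum_nonneg (fun i (_ : i ∈ Finset.univ) => norm_nonneg (x i))]
      _ = (∑ i, ‖x i‖ * 1) ^ 2 := by simp
      _ ≤ (∑ i, ‖x i‖ ^ 2) * ∑ _i : Fin N, (1:ℝ) ^ 2 :=
          Finset.sum_mul_sq_le_sq_mul_sq _ _ _
      _ = (N : ℝ) * ∑ i, ‖x i‖ ^ 2 := by simp [mul_comm]
  have hsum : ∑ j, ‖((P.map Complex.ofReal)ᵀ *ᵥ x) j‖ ^ 2 / π j ≤
      ((N : ℝ) * ∑ j, (π j)⁻¹) * ∑ i, ‖x i‖ ^ 2 / π i := by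
    calc ∑ j, ‖((P.map Complex.ofReal)ᵀ *ᵥ x) j‖ ^ 2 / π j
        ≤ ∑ j, ((N : ℝ) * ∑ i, ‖x i‖ ^ 2) / π j := by
          exact Finset.sum_le_sum fun j _ => (div_le_div_iff_of_pos_right (hπ j)).mpr (hentry j)
      _ ≤ ∑ j, ((N : ℝ) * ∑ i, ‖x i‖ ^ 2 / π i) / π j := by
          refine Finset.sum_le_sum fun j _ => ?_
          exact (div_le_div_iff_of_pos_right (hπ j)).mpr
            (mul_le_mul_of_nonneg_left (Finset.sum_le_sum fun i _ => hQx i) (Nat.cast_nonneg N))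
      _ = ((N : ℝ) * ∑ j, (π j)⁻¹) * ∑ i, ‖x i‖ ^ 2 / π i := by
          simp only [div_eq_mul_inv, ← Finset.mul_sum]
          ring
  rw [piNorm, piNorm]
  calc Real.sqrt (∑ j, ‖((P.map Complex.ofReal)ᵀ *ᵥ x) j‖ ^ 2 / π j)
      ≤ Real.sqrt (((N : ℝ) * ∑ j, (π j)⁻¹) * ∑ i, ‖x i‖ ^ 2 / π i) := Real.sqrt_le_sqrt hsum
    _ = Real.sqrt ((N : ℝ) * ∑ j, (π j)⁻¹) * Real.sqrt (∑ i, ‖x i‖ ^ 2 / π i) :=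
        Real.sqrt_mul (mul_nonneg (Nat.cast_nonneg N)
          (Finset.sum_nonneg fun j _ => inv_nonneg.mpr (hπ j).le)) _

lemma aux_specExp_nonneg {N : ℕ} {P : Matrix (Fin N) (Fin N) ℝ} {π : Fin N → ℝ} :
    0 ≤ specExp P π := by
  apply Real.sSup_nonneg
  rintro r ⟨x, -, -, rfl⟩
  exact div_nonneg (Real.sqrt_nonneg _) (Real.sqrt_nonneg _)

lemma aux_specExp_bound {N : ℕ} {P : Matrix (Fin N) (Fin N) ℝ} {π : Fin N → ℝ}
    (hπ : ∀ i, 0 < π i) (hπ1 : ∀ i, π i ≤ 1)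
    (hPnn : ∀ i j, 0 ≤ P i j) (hP1 : ∀ i j, P i j ≤ 1)
    (x : Fin N → ℂ) (hx0 : ∑ i, x i = 0) :
    piNorm π ((P.map Complex.ofReal)ᵀ *ᵥ x) ≤ specExp P π * piNorm π x := by
  by_cases hx : x = 0
  · subst hx
    simp only [mulVec_zero]
    rw [show ((0 : Fin N → ℂ) = fun _ => 0) from rfl] at *
    simp [piNorm]
  · have hbdd : BddAbove {r : ℝ | ∃ x : Fin N → ℂ, x ≠ 0 ∧
        piInner π x (fun i => (π i : ℂ)) = 0 ∧
        r = piNorm π ((P.map Complex.ofReal)ᵀ *ᵥ x) / piNorm π x} := by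
      refine ⟨Real.sqrt ((N : ℝ) * ∑ j, (π j)⁻¹), ?_⟩
      rintro r ⟨x, hx, -, rfl⟩
      rw [div_le_iff₀ (aux_piNorm_pos hπ hx)]
      exact aux_Pnorm_crude hπ hπ1 hPnn hP1 x
    have hmem : piNorm π ((P.map Complex.ofReal)ᵀ *ᵥ x) / piNorm π x ∈
        {r : ℝ | ∃ x : Fin N → ℂ, x ≠ 0 ∧ piInner π x (fun i => (π i : ℂ)) = 0 ∧
          r = piNorm π ((P.map Complex.ofReal)ᵀ *ᵥ x) / piNorm π x} := by
      refine ⟨x, hx, ?_, rfl⟩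
      rw [piInner, ← hx0]
      refine Finset.sum_congr rfl fun i _ => ?_
      rw [Complex.conj_ofReal, mul_comm, mul_div_assoc, div_self, mul_one]
      exact_mod_cast (hπ i).ne'
    have hle := le_csSup hbdd hmem
    rw [div_le_iff₀ (aux_piNorm_pos hπ hx)] at hle
    exact hle

lemma aux_l2_pos {m : ℕ} {v : Fin m → ℂ} (hv : v ≠ 0) :
    0 < Real.sqrt (∑ i, ‖v i‖ ^ 2) := by
  rw [Real.sqrt_pos]
  obtain ⟨i, hi⟩ : ∃ i, v i ≠ 0 := by
    by_contra h; push_neg at h; exact hv (funext h)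
  exact Finset.sum_pos' (fun j _ => sq_nonneg _)
    ⟨i, Finset.mem_univ i, pow_pos (norm_pos_iff.mpr hi) 2⟩

lemma aux_mulVec_l2_crude {m : ℕ} (A : Matrix (Fin m) (Fin m) ℂ) (v : Fin m → ℂ) :
    Real.sqrt (∑ i, ‖(A *ᵥ v) i‖ ^ 2) ≤
      Real.sqrt (∑ i, ∑ j, ‖A i j‖ ^ 2) * Real.sqrt (∑ j, ‖v j‖ ^ 2) := by
  rw [← Real.sqrt_mul (Finset.sum_nonneg fun i _ => Finset.sum_nonneg fun j _ => sq_nonneg _)]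
  apply Real.sqrt_le_sqrt
  rw [Finset.sum_mul]
  refine Finset.sum_le_sum fun i _ => ?_
  calc ‖(A *ᵥ v) i‖ ^ 2 ≤ (∑ j, ‖A i j‖ * ‖v j‖) ^ 2 := by
        have h1 : ‖(A *ᵥ v) i‖ ≤ ∑ j, ‖A i j‖ * ‖v j‖ := by
          rw [mulVec, dotProduct]
          exact (norm_sum_le _ _).trans (Finset.sum_le_sum fun j _ => (norm_mul_le _ _))
        nlinarith [norm_nonneg ((A *ᵥ v) i),
          Finset.sum_nonneg fun j (_ : j ∈ Finset.univ) =>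
            mul_nonneg (norm_nonneg (A i j)) (norm_nonneg (v j))]
    _ ≤ (∑ j, ‖A i j‖ ^ 2) * ∑ j, ‖v j‖ ^ 2 := Finset.sum_mul_sq_le_sq_mul_sq _ _ _

lemma aux_spectralNorm_mulVec_le {m : ℕ} {A : Matrix (Fin m) (Fin m) ℂ} {c : ℝ} (hc : 0 ≤ c)
    (hA : matSpectralNorm A ≤ c) (v : Fin m → ℂ) :
    Real.sqrt (∑ i, ‖(A *ᵥ v) i‖ ^ 2) ≤ c * Real.sqrt (∑ j, ‖v j‖ ^ 2) := by
  by_cases hv : v = 0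
  · subst hv
    simp only [mulVec_zero]
    have h0 : Real.sqrt (∑ i, ‖(0 : Fin m → ℂ) i‖ ^ 2) = 0 := by
      rw [show (∑ i, ‖(0 : Fin m → ℂ) i‖ ^ 2) = 0 by simp, Real.sqrt_zero]
    rw [h0]
    positivity
  · have hbdd : BddAbove {r : ℝ | ∃ x : Fin m → ℂ, x ≠ 0 ∧
        r = Real.sqrt (∑ i, ‖(A *ᵥ x) i‖ ^ 2) / Real.sqrt (∑ j, ‖x j‖ ^ 2)} := by
      refine ⟨Real.sqrt (∑ i, ∑ j, ‖A i j‖ ^ 2), ?_⟩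
      rintro r ⟨x, hx, rfl⟩
      rw [div_le_iff₀ (aux_l2_pos hx)]
      exact aux_mulVec_l2_crude A x
    have hmem : Real.sqrt (∑ i, ‖(A *ᵥ v) i‖ ^ 2) / Real.sqrt (∑ j, ‖v j‖ ^ 2) ∈
        {r : ℝ | ∃ x : Fin m → ℂ, x ≠ 0 ∧
          r = Real.sqrt (∑ i, ‖(A *ᵥ x) i‖ ^ 2) / Real.sqrt (∑ j, ‖x j‖ ^ 2)} := ⟨v, hv, rfl⟩
    have := (le_csSup hbdd hmem).trans hA
    rwa [div_le_iff₀ (aux_l2_pos hv)] at this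

noncomputable abbrev auxECLM {m : ℕ} : Matrix (Fin m) (Fin m) ℂ ≃⋆ₐ[ℂ]
    (EuclideanSpace ℂ (Fin m) →L[ℂ] EuclideanSpace ℂ (Fin m)) := Matrix.toEuclideanCLM (𝕜 := ℂ)

lemma auxECLM_apply {m : ℕ} (A : Matrix (Fin m) (Fin m) ℂ) (v : EuclideanSpace ℂ (Fin m)) :
    (auxECLM A) v = A *ᵥ v := rfl

set_option maxHeartbeats 1000000 in
lemma aux_norm_eCLM_mexp_le {m : ℕ} (A : Matrix (Fin m) (Fin m) ℂ) (c : ℝ)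
    (hA : ‖auxECLM A‖ ≤ c) : ‖auxECLM (mexp A)‖ ≤ Real.exp c := by
  set T := auxECLM A with hT
  have hsum : Summable fun k : ℕ => ((k.factorial : ℂ))⁻¹ • T ^ k :=
    NormedSpace.expSeries_summable' (𝕂 := ℂ) T
  let L0 : (EuclideanSpace ℂ (Fin m) →L[ℂ] EuclideanSpace ℂ (Fin m)) →ₗ[ℂ]
      Matrix (Fin m) (Fin m) ℂ :=
    { toFun := fun X => auxECLM.symm X
      map_add' := fun x y => map_add _ x y
      map_smul' := fun c x => map_smul _ c x }
  let L : (EuclideanSpace ℂ (Fin m) →L[ℂ] EuclideanSpace ℂ (Fin m)) →L[ℂ]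
      Matrix (Fin m) (Fin m) ℂ := ⟨L0, L0.continuous_of_finiteDimensional⟩
  have hL : ∀ X, L X = auxECLM.symm X := fun X => rfl
  have hkey : mexp A = auxECLM.symm (∑' k : ℕ, ((k.factorial : ℂ))⁻¹ • T ^ k) := by
    rw [mexp, ← hL, L.map_tsum hsum]
    refine tsum_congr fun k => ?_
    rw [hL, _root_.map_smul, map_pow, hT, StarAlgEquiv.symm_apply_apply]
  have h2 : auxECLM (mexp A) = ∑' k : ℕ, ((k.factorial : ℂ))⁻¹ • T ^ k := by
    rw [hkey, StarAlgEquiv.apply_symm_apply]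
  rw [h2]
  have hnsum : Summable fun k : ℕ => ‖((k.factorial : ℂ))⁻¹ • T ^ k‖ :=
    NormedSpace.norm_expSeries_summable' (𝕂 := ℂ) T
  calc ‖∑' k : ℕ, ((k.factorial : ℂ))⁻¹ • T ^ k‖ ≤ ∑' k : ℕ, ‖((k.factorial : ℂ))⁻¹ • T ^ k‖ :=
        norm_tsum_le_tsum_norm hnsum
    _ ≤ ∑' k : ℕ, c ^ k / (k.factorial : ℝ) := by
        refine Summable.tsum_le_tsum (fun k => ?_) hnsum (Real.summable_pow_div_factorial c)
        have h1 : ‖((k.factorial : ℂ))⁻¹‖ = ((k.factorial : ℝ))⁻¹ := by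
          rw [norm_inv]; simp
        have hTk : ‖T ^ k‖ ≤ c ^ k := by
          have h2 : ‖T ^ k‖ ≤ ‖T‖ ^ k := by
            cases k with
            | zero =>
                rw [pow_zero, pow_zero, ContinuousLinearMap.one_def]
                exact ContinuousLinearMap.norm_id_le
            | succ n => exact norm_pow_le' T (Nat.succ_pos n)
          exact h2.trans (pow_le_pow_left₀ (norm_nonneg _) hA k)
        calc ‖((k.factorial : ℂ))⁻¹ • T ^ k‖ ≤ ‖((k.factorial : ℂ))⁻¹‖ * ‖T ^ k‖ :=
              ContinuousLinearMap.opNorm_smul_le _ _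
          _ ≤ ((k.factorial : ℝ))⁻¹ * c ^ k := by
              rw [h1]
              exact mul_le_mul_of_nonneg_left hTk (inv_nonneg.mpr (Nat.cast_nonneg _))
          _ = c ^ k / (k.factorial : ℝ) := by rw [div_eq_mul_inv, mul_comm]
    _ = Real.exp c := by
        rw [Real.exp_eq_exp_ℝ, NormedSpace.exp_eq_tsum_div]

lemma aux_euclid_norm {m : ℕ} (v : EuclideanSpace ℂ (Fin m)) :
    ‖v‖ = Real.sqrt (∑ i, ‖v i‖ ^ 2) := EuclideanSpace.norm_eq v

lemma aux_eCLM_norm_le {m : ℕ} {A : Matrix (Fin m) (Fin m) ℂ} {c : ℝ} (hc : 0 ≤ c)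
    (hpt : ∀ v : Fin m → ℂ,
      Real.sqrt (∑ i, ‖(A *ᵥ v) i‖ ^ 2) ≤ c * Real.sqrt (∑ i, ‖v i‖ ^ 2)) :
    ‖auxECLM A‖ ≤ c := by
  refine ContinuousLinearMap.opNorm_le_bound _ hc fun v => ?_
  rw [aux_euclid_norm, aux_euclid_norm]
  exact hpt v

lemma aux_mexp_conj_bound {m : ℕ} (A : Matrix (Fin m) (Fin m) ℂ) (ℓ t : ℝ)
    (hℓ : 0 ≤ ℓ) (ht : 0 ≤ t)
    (hA : ∀ v : Fin m → ℂ,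
      Real.sqrt (∑ i, ‖(A *ᵥ v) i‖ ^ 2) ≤ ℓ * Real.sqrt (∑ i, ‖v i‖ ^ 2))
    (u : Fin m → ℂ) :
    Real.sqrt (∑ j, ‖(((mexp ((t : ℂ) • A))ᴴ) *ᵥ u) j‖ ^ 2) ≤
      Real.exp (t * ℓ) * Real.sqrt (∑ j, ‖u j‖ ^ 2) := by
  have hsm : ‖auxECLM ((t : ℂ) • A)‖ ≤ t * ℓ := by
    have h1 : auxECLM ((t : ℂ) • A) = (t : ℂ) • auxECLM A := map_smul _ _ _
    have h2 : ‖auxECLM A‖ ≤ ℓ := aux_eCLM_norm_le hℓ hA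
    rw [h1]
    calc ‖(t : ℂ) • auxECLM A‖ ≤ ‖(t : ℂ)‖ * ‖auxECLM A‖ :=
          ContinuousLinearMap.opNorm_smul_le _ _
      _ ≤ t * ℓ := by
          rw [Complex.norm_real, Real.norm_eq_abs, abs_of_nonneg ht]
          exact mul_le_mul_of_nonneg_left h2 ht
  have hexp : ‖auxECLM (mexp ((t : ℂ) • A))‖ ≤ Real.exp (t * ℓ) :=
    aux_norm_eCLM_mexp_le _ _ hsm
  have hconj : ‖auxECLM ((mexp ((t : ℂ) • A))ᴴ)‖ ≤ Real.exp (t * ℓ) := by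
    rw [← Matrix.star_eq_conjTranspose, map_star, ContinuousLinearMap.star_eq_adjoint]
    calc ‖ContinuousLinearMap.adjoint (auxECLM (mexp ((t : ℂ) • A)))‖
        = ‖auxECLM (mexp ((t : ℂ) • A))‖ :=
          LinearIsometryEquiv.norm_map ContinuousLinearMap.adjoint _
      _ ≤ Real.exp (t * ℓ) := hexp
  have h3 := (auxECLM ((mexp ((t : ℂ) • A))ᴴ)).le_opNorm (WithLp.toLp 2 u)
  have hle := h3.trans (mul_le_mul_of_nonneg_right hconj (norm_nonneg _))
  rw [aux_euclid_norm, aux_euclid_norm, auxECLM_apply] at hle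
  simpa only [WithLp.ofLp_toLp] using hle

lemma aux_kron_transpose_mulVec {N m : ℕ} (P : Matrix (Fin N) (Fin N) ℝ)
    (x : Fin N × Fin m → ℂ) (p : Fin N × Fin m) :
    (((P.map Complex.ofReal) ⊗ₖ (1 : Matrix (Fin m) (Fin m) ℂ))ᵀ *ᵥ x) p
      = ∑ i, (P i p.1 : ℂ) * x (i, p.2) := by
  rw [mulVec, dotProduct, Fintype.sum_prod_type]
  simp only [transpose_apply, kroneckerMap_apply, Matrix.map_apply, Matrix.one_apply]
  refine Finset.sum_congr rfl fun i _ => ?_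
  rw [Finset.sum_eq_single p.2]
  · simp
  · intro k _ hk
    simp [hk]
  · simp

lemma aux_blockDiag'_conj_mulVec {N m : ℕ} (M : Fin N → Matrix (Fin m) (Fin m) ℂ)
    (z : Fin N × Fin m → ℂ) (p : Fin N × Fin m) :
    ((_root_.blockDiag' M)ᴴ *ᵥ z) p = ((M p.1)ᴴ *ᵥ fun k => z (p.1, k)) p.2 := by
  rw [mulVec, dotProduct, Fintype.sum_prod_type]
  rw [Finset.sum_eq_single p.1]
  · simp only [conjTranspose_apply, _root_.blockDiag', of_apply]
    rw [mulVec, dotProduct]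
    refine Finset.sum_congr rfl fun k _ => ?_
    simp [conjTranspose_apply]
  · intro i _ hi
    apply Finset.sum_eq_zero
    intro k _
    simp only [conjTranspose_apply, _root_.blockDiag', of_apply]
    rw [if_neg hi]
    simp
  · simp

lemma aux_kron_spec_bound {N m : ℕ} {P : Matrix (Fin N) (Fin N) ℝ} {π : Fin N → ℝ}
    (hπ : ∀ i, 0 < π i) (hπ1 : ∀ i, π i ≤ 1)
    (hPnn : ∀ i j, 0 ≤ P i j) (hP1 : ∀ i j, P i j ≤ 1)
    {x : Fin N × Fin m → ℂ} (hx : perpU π x) :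
    piNormKron π (((P.map Complex.ofReal) ⊗ₖ (1 : Matrix (Fin m) (Fin m) ℂ))ᵀ *ᵥ x)
      ≤ specExp P π * piNormKron π x := by
  have hlam : 0 ≤ specExp P π := aux_specExp_nonneg
  have hslice : ∀ l : Fin m, ∑ i, x (i, l) = 0 := by
    intro l
    have h := hx (fun k => if k = l then 1 else 0)
    rw [piInnerKron, Fintype.sum_prod_type] at h
    rw [← h]
    refine (Finset.sum_congr rfl fun i _ => ?_).symm
    rw [Finset.sum_eq_single l]
    · have hne : ((π i : ℂ)) ≠ 0 := by exact_mod_cast (hπ i).ne'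
      simp only [eq_self_iff_true, if_true, _root_.map_mul, _root_.map_one, mul_one,
        Complex.conj_ofReal]
      field_simp
    · intro k _ hk
      simp [hk]
    · simp
  have hsq : ∀ l : Fin m,
      ∑ j, ‖((P.map Complex.ofReal)ᵀ *ᵥ fun i => x (i, l)) j‖ ^ 2 / π j
        ≤ (specExp P π) ^ 2 * ∑ i, ‖x (i, l)‖ ^ 2 / π i := by
    intro l
    have h := aux_specExp_bound hπ hπ1 hPnn hP1 (fun i => x (i, l)) (hslice l)
    have hnn1 : 0 ≤ ∑ j, ‖((P.map Complex.ofReal)ᵀ *ᵥ fun i => x (i, l)) j‖ ^ 2 / π j :=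
      Finset.sum_nonneg fun j _ => div_nonneg (sq_nonneg _) (hπ j).le
    have hnn2 : 0 ≤ ∑ i, ‖x (i, l)‖ ^ 2 / π i :=
      Finset.sum_nonneg fun i _ => div_nonneg (sq_nonneg _) (hπ i).le
    have h2 := pow_le_pow_left₀ (Real.sqrt_nonneg _) h 2
    unfold piNorm at h2
    rw [Real.sq_sqrt hnn1, mul_pow, Real.sq_sqrt hnn2] at h2
    exact h2
  have hQ : ∑ p, ‖(((P.map Complex.ofReal) ⊗ₖ (1 : Matrix (Fin m) (Fin m) ℂ))ᵀ *ᵥ x) p‖ ^ 2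
        / π p.1
      ≤ (specExp P π) ^ 2 * ∑ p, ‖x p‖ ^ 2 / π p.1 := by
    rw [Fintype.sum_prod_type, Finset.sum_comm]
    have hxQ : ∑ p : Fin N × Fin m, ‖x p‖ ^ 2 / π p.1
        = ∑ l, ∑ i, ‖x (i, l)‖ ^ 2 / π i := by
      rw [Fintype.sum_prod_type, Finset.sum_comm]
    rw [hxQ, Finset.mul_sum]
    refine Finset.sum_le_sum fun l _ => ?_
    calc ∑ j, ‖(((P.map Complex.ofReal) ⊗ₖ (1 : Matrix (Fin m) (Fin m) ℂ))ᵀ *ᵥ x) (j, l)‖ ^ 2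
          / π j
        = ∑ j, ‖((P.map Complex.ofReal)ᵀ *ᵥ fun i => x (i, l)) j‖ ^ 2 / π j := by
          refine Finset.sum_congr rfl fun j _ => ?_
          rw [aux_kron_transpose_mulVec]
          rw [show ((P.map Complex.ofReal)ᵀ *ᵥ fun i => x (i, l)) j
              = ∑ i, (P i j : ℂ) * x (i, l) by
            rw [mulVec, dotProduct]
            refine Finset.sum_congr rfl fun i _ => ?_
            simp [transpose_apply]]
      _ ≤ (specExp P π) ^ 2 * ∑ i, ‖x (i, l)‖ ^ 2 / π i := hsq l
  rw [piNormKron, piNormKron]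
  calc Real.sqrt (∑ p, ‖(((P.map Complex.ofReal) ⊗ₖ (1 : Matrix (Fin m) (Fin m) ℂ))ᵀ *ᵥ x) p‖ ^ 2
        / π p.1)
      ≤ Real.sqrt ((specExp P π) ^ 2 * ∑ p, ‖x p‖ ^ 2 / π p.1) := Real.sqrt_le_sqrt hQ
    _ = specExp P π * Real.sqrt (∑ p, ‖x p‖ ^ 2 / π p.1) := by
        rw [Real.sqrt_mul (sq_nonneg _), Real.sqrt_sq hlam]

lemma aux_block_bound {N m : ℕ} {π : Fin N → ℝ} (hπ : ∀ i, 0 < π i) {c : ℝ} (hc : 0 ≤ c)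
    (M : Fin N → Matrix (Fin m) (Fin m) ℂ)
    (hM : ∀ i (u : Fin m → ℂ),
      Real.sqrt (∑ j, ‖((M i)ᴴ *ᵥ u) j‖ ^ 2) ≤ c * Real.sqrt (∑ j, ‖u j‖ ^ 2))
    (z : Fin N × Fin m → ℂ) :
    piNormKron π ((_root_.blockDiag' M)ᴴ *ᵥ z) ≤ c * piNormKron π z := by
  have hQ : ∑ p, ‖((_root_.blockDiag' M)ᴴ *ᵥ z) p‖ ^ 2 / π p.1
      ≤ c ^ 2 * ∑ p, ‖z p‖ ^ 2 / π p.1 := by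
    rw [Fintype.sum_prod_type, Fintype.sum_prod_type, Finset.mul_sum]
    refine Finset.sum_le_sum fun i _ => ?_
    have h := hM i (fun k => z (i, k))
    have hnn1 : 0 ≤ ∑ j, ‖((M i)ᴴ *ᵥ fun k => z (i, k)) j‖ ^ 2 :=
      Finset.sum_nonneg fun j _ => sq_nonneg _
    have hnn2 : 0 ≤ ∑ k, ‖z (i, k)‖ ^ 2 := Finset.sum_nonneg fun k _ => sq_nonneg _
    have h2 := pow_le_pow_left₀ (Real.sqrt_nonneg _) h 2
    rw [Real.sq_sqrt hnn1, mul_pow, Real.sq_sqrt hnn2] at h2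
    calc ∑ j, ‖((_root_.blockDiag' M)ᴴ *ᵥ z) (i, j)‖ ^ 2 / π i
        = (∑ j, ‖((M i)ᴴ *ᵥ fun k => z (i, k)) j‖ ^ 2) / π i := by
          rw [Finset.sum_div]
          exact Finset.sum_congr rfl fun j _ => by rw [aux_blockDiag'_conj_mulVec]
      _ ≤ (c ^ 2 * ∑ k, ‖z (i, k)‖ ^ 2) / π i := (div_le_div_iff_of_pos_right (hπ i)).mpr h2
      _ = c ^ 2 * ∑ k, ‖z (i, k)‖ ^ 2 / π i := by rw [mul_div_assoc, Finset.sum_div]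
  rw [piNormKron, piNormKron]
  calc Real.sqrt (∑ p, ‖((_root_.blockDiag' M)ᴴ *ᵥ z) p‖ ^ 2 / π p.1)
      ≤ Real.sqrt (c ^ 2 * ∑ p, ‖z p‖ ^ 2 / π p.1) := Real.sqrt_le_sqrt hQ
    _ = c * Real.sqrt (∑ p, ‖z p‖ ^ 2 / π p.1) := by
        rw [Real.sqrt_mul (sq_nonneg _), Real.sqrt_sq hc]

end AuxCE

theorem stmt_15 {N m : ℕ} (hm : 1 ≤ m)
    (P : Matrix (Fin N) (Fin N) ℝ) (π : Fin N → ℝ)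
    (hP : IsMarkov P) (hreg : IsRegularMC P) (hπ : IsStationaryMC P π)
    (ℓ t : ℝ) (hℓ : 0 ≤ ℓ) (ht : 0 < t)
    (H : Fin N → Matrix (Fin m) (Fin m) ℂ)
    (hH : ∀ i, matSpectralNorm (H i) ≤ ℓ)
    (hmean : ∑ i, π i • H i = 0)
    (z zpar zperp : Fin N × Fin m → ℂ)
    (hdecz : z = zpar + zperp) (hzpar : memU π zpar) (hzperp : perpU π zperp)
    (y ypar yperp : Fin N × Fin m → ℂ)
    (hy : y = ((P.map Complex.ofReal) ⊗ₖ (1 : Matrix (Fin m) (Fin m) ℂ))ᵀ *ᵥ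
      ((blockDiag' fun i => mexp ((t : ℂ) • H i))ᴴ *ᵥ zperp))
    (hdecy : y = ypar + yperp) (hypar : memU π ypar) (hyperp : perpU π yperp) :
    piNormKron π yperp ≤ (specExp P π * Real.exp (t * ℓ)) * piNormKron π zperp := by
  obtain ⟨hPnn, hProw⟩ := hP
  obtain ⟨hπpos, hπsum, hπstat⟩ := hπ
  have hπ1 : ∀ i, π i ≤ 1 := fun i => by
    calc π i ≤ ∑ j, π j :=
          Finset.single_le_sum (fun j _ => (hπpos j).le) (Finset.mem_univ i)
      _ = 1 := hπsum
  have hP1 : ∀ i j, P i j ≤ 1 := fun i j => by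
    calc P i j ≤ ∑ j', P i j' :=
          Finset.single_le_sum (fun j' _ => hPnn i j') (Finset.mem_univ j)
      _ = 1 := hProw i
  have hlam : 0 ≤ specExp P π := aux_specExp_nonneg
  set v : Fin N × Fin m → ℂ :=
    (blockDiag' fun i => mexp ((t : ℂ) • H i))ᴴ *ᵥ zperp with hv
  set w0 : Fin m → ℂ := fun l => ∑ i, v (i, l) with hw0
  set vpar : Fin N × Fin m → ℂ := fun p => (π p.1 : ℂ) * w0 p.2 with hvpar'
  have hvpar : memU π vpar := ⟨w0, fun p => rfl⟩
  set vperp : Fin N × Fin m → ℂ := v - vpar with hvperp'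
  have hvdec : v = vpar + vperp := by
    funext p; simp [hvperp']
  have hvperp : perpU π vperp := by
    intro w'
    rw [piInnerKron]
    have hterm : ∀ p : Fin N × Fin m,
        (starRingEnd ℂ) ((π p.1 : ℂ) * w' p.2) * vperp p / (π p.1 : ℂ)
          = (starRingEnd ℂ) (w' p.2) * v p
            - (π p.1 : ℂ) * ((starRingEnd ℂ) (w' p.2) * w0 p.2) := by
      intro p
      have hne : ((π p.1 : ℂ)) ≠ 0 := by exact_mod_cast (hπpos p.1).ne'
      have : vperp p = v p - (π p.1 : ℂ) * w0 p.2 := rfl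
      rw [this, _root_.map_mul, Complex.conj_ofReal]
      field_simp
    rw [Finset.sum_congr rfl fun p _ => hterm p, Finset.sum_sub_distrib,
      Fintype.sum_prod_type, Fintype.sum_prod_type]
    have h1 : ∑ i, ∑ l, (starRingEnd ℂ) (w' l) * v (i, l)
        = ∑ l, (starRingEnd ℂ) (w' l) * w0 l := by
      rw [Finset.sum_comm]
      exact Finset.sum_congr rfl fun l _ => by rw [hw0]; simp [Finset.mul_sum]
    have h2 : ∑ i, ∑ l, (π i : ℂ) * ((starRingEnd ℂ) (w' l) * w0 l)
        = ∑ l, (starRingEnd ℂ) (w' l) * w0 l := by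
      rw [Finset.sum_comm]
      refine Finset.sum_congr rfl fun l _ => ?_
      rw [← Finset.sum_mul]
      have : (∑ i, (π i : ℂ)) = 1 := by
        rw [← Complex.ofReal_sum, hπsum, Complex.ofReal_one]
      rw [this, one_mul]
    rw [h1, h2, sub_self]
  -- P̃ᵀ fixes vpar
  have hfix : ((P.map Complex.ofReal) ⊗ₖ (1 : Matrix (Fin m) (Fin m) ℂ))ᵀ *ᵥ vpar = vpar := by
    funext p
    rw [aux_kron_transpose_mulVec]
    have : ∀ i, (P i p.1 : ℂ) * vpar (i, p.2) = ((π i * P i p.1 : ℝ) : ℂ) * w0 p.2 := by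
      intro i
      show (P i p.1 : ℂ) * ((π i : ℂ) * w0 p.2) = _
      push_cast
      try ring
    rw [Finset.sum_congr rfl fun i _ => this i, ← Finset.sum_mul, ← Complex.ofReal_sum,
      hπstat p.1]
  -- decomposition of y
  have hydec : ((P.map Complex.ofReal) ⊗ₖ (1 : Matrix (Fin m) (Fin m) ℂ))ᵀ *ᵥ vperp
      = (ypar - vpar) + yperp := by
    have h1 : y = (((P.map Complex.ofReal) ⊗ₖ (1 : Matrix (Fin m) (Fin m) ℂ))ᵀ *ᵥ vpar)
        + (((P.map Complex.ofReal) ⊗ₖ (1 : Matrix (Fin m) (Fin m) ℂ))ᵀ *ᵥ vperp) := by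
      rw [hy, ← mulVec_add, ← hvdec]
    rw [hfix] at h1
    have := hdecy
    rw [h1] at this
    funext p
    have hp := congrFun this p
    simp only [Pi.add_apply, Pi.sub_apply] at hp ⊢
    linear_combination hp
  -- step 1
  have hstep1 : piNormKron π yperp ≤
      piNormKron π (((P.map Complex.ofReal) ⊗ₖ (1 : Matrix (Fin m) (Fin m) ℂ))ᵀ *ᵥ vperp) :=
    aux_perp_norm_le hπpos hydec (aux_memU_sub hypar hvpar) hyperp
  -- step 2
  have hstep2 : piNormKron π (((P.map Complex.ofReal) ⊗ₖ (1 : Matrix (Fin m) (Fin m) ℂ))ᵀ *ᵥ vperp)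
      ≤ specExp P π * piNormKron π vperp :=
    aux_kron_spec_bound hπpos hπ1 hPnn hP1 hvperp
  -- step 3
  have hstep3 : piNormKron π vperp ≤ piNormKron π v :=
    aux_perp_norm_le hπpos hvdec hvpar hvperp
  -- step 4
  have hstep4 : piNormKron π v ≤ Real.exp (t * ℓ) * piNormKron π zperp := by
    rw [hv]
    refine aux_block_bound hπpos (Real.exp_nonneg _) _ (fun i u => ?_) zperp
    exact aux_mexp_conj_bound (H i) ℓ t hℓ ht.le
      (fun x => aux_spectralNorm_mulVec_le hℓ (hH i) x) u
  calc piNormKron π yperp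
      ≤ specExp P π * piNormKron π vperp := hstep1.trans hstep2
    _ ≤ specExp P π * (Real.exp (t * ℓ) * piNormKron π zperp) :=
        mul_le_mul_of_nonneg_left (hstep3.trans hstep4) hlam
    _ = (specExp P π * Real.exp (t * ℓ)) * piNormKron π zperp := by ring
end

section
/- Let P be a regular Markov chain on state space [N] with stationary distribution π and spectral expansion λ. Let m ≥ 1, ℓ ≥ 0, t > 0, and let H_1,…,H_N ∈ ℂ^{m×m} satisfy ‖H_i‖₂ ≤ ℓ for all i and Σ_{i∈[N]} π_i H_i = 0. Let E be the block-diagonal matrix with i-th diagonal block exp(tH_i), let P̃ := P ⊗ I_m, and assume α₄ := λ·exp(tℓ) < 1. Let z_0 ∈ U (so z_0^⊥ = 0) and define z_i := P̃ᵀ E* z_{i−1} for i ≥ 1. Then for every i ≥ 1, ‖z_i^⊥‖_π ≤ ( λ(exp(tℓ)−1) / (1 − λ·exp(tℓ)) ) · max_{0 ≤ j < i} ‖z_j^∥‖_π. -/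
open scoped BigOperators Kronecker ComplexOrder
open Matrix

/-- The spectral (operator 2-)norm of a matrix. -/
noncomputable def spectralNormM {𝕜 : Type*} [RCLike 𝕜] {m n : Type*} [Fintype m] [Fintype n]
    (A : Matrix m n 𝕜) : ℝ :=
  sSup {r : ℝ | ∃ x : n → 𝕜, x ≠ 0 ∧
    r = Real.sqrt (∑ i, ‖(A *ᵥ x) i‖ ^ 2) / Real.sqrt (∑ j, ‖x j‖ ^ 2)}

noncomputable def esq {m : Type*} [Fintype m] (v : m → ℂ) : ℝ := ∑ k, ‖v k‖ ^ 2

lemma esq_nonneg {m : Type*} [Fintype m] (v : m → ℂ) : 0 ≤ esq v :=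
  Finset.sum_nonneg fun _ _ => by positivity

lemma esq_pos {m : Type*} [Fintype m] {v : m → ℂ} (hv : v ≠ 0) : 0 < esq v := by
  rcases (esq_nonneg v).lt_or_eq with h | h
  · exact h
  · exfalso; apply hv
    funext k
    have := (Finset.sum_eq_zero_iff_of_nonneg (fun i _ => by positivity)).mp h.symm k
      (Finset.mem_univ k)
    have : ‖v k‖ = 0 := by nlinarith [norm_nonneg (v k)]
    simpa using this

/-- `A` maps Euclidean balls with factor `C` (squared form). -/
def gd {m : Type*} [Fintype m] (A : Matrix m m ℂ) (C : ℝ) : Prop :=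
  ∀ v : m → ℂ, esq (A *ᵥ v) ≤ C ^ 2 * esq v

lemma esq_single {m : Type*} [Fintype m] [DecidableEq m] (j : m) :
    esq (Pi.single j (1:ℂ)) = 1 := by
  unfold esq
  rw [Finset.sum_eq_single j]
  · simp
  · intro k _ hk; simp [Pi.single_apply, hk]
  · simp

lemma gd_entry_bound {m : Type*} [Fintype m] [DecidableEq m] {A : Matrix m m ℂ} {C : ℝ}
    (h : gd A C) (i j : m) : ‖A i j‖ ^ 2 ≤ C ^ 2 := by
  have h1 := h (Pi.single j 1)
  rw [esq_single, mul_one] at h1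
  refine le_trans ?_ h1
  unfold esq
  have : ‖(A *ᵥ Pi.single j 1) i‖ ^ 2 = ‖A i j‖ ^ 2 := by
    simp [Matrix.mulVec_single]
  rw [← this]
  exact Finset.single_le_sum (f := fun k => ‖(A *ᵥ Pi.single j 1) k‖ ^ 2)
    (fun k _ => by positivity) (Finset.mem_univ i)

lemma frobenius_gd {m : Type*} [Fintype m] (A : Matrix m m ℂ) :
    gd A (Real.sqrt (∑ i, ∑ j, ‖A i j‖ ^ 2)) := by
  intro v
  have hF : (0:ℝ) ≤ ∑ i, ∑ j, ‖A i j‖ ^ 2 :=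
    Finset.sum_nonneg fun _ _ => Finset.sum_nonneg fun _ _ => by positivity
  rw [Real.sq_sqrt hF]
  unfold esq
  rw [Finset.sum_mul]
  refine Finset.sum_le_sum fun i _ => ?_
  have h1 : ‖(A *ᵥ v) i‖ ≤ ∑ j, ‖A i j‖ * ‖v j‖ := by
    refine le_trans (norm_sum_le _ _) ?_
    exact Finset.sum_le_sum fun j _ => by rw [norm_mul]
  have h2 : ‖(A *ᵥ v) i‖ ^ 2 ≤ (∑ j, ‖A i j‖ * ‖v j‖) ^ 2 := by
    have := norm_nonneg ((A *ᵥ v) i); nlinarith [Finset.sum_nonneg (fun j (_ : j ∈ Finset.univ) => mul_nonneg (norm_nonneg (A i j)) (norm_nonneg (v j)))]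
  refine h2.trans ?_
  exact Finset.sum_mul_sq_le_sq_mul_sq _ _ _

lemma gd_sqrt {m : Type*} [Fintype m] {A : Matrix m m ℂ} {C : ℝ}
    (hC : 0 ≤ C) (h : gd A C) (v : m → ℂ) :
    Real.sqrt (esq (A *ᵥ v)) ≤ C * Real.sqrt (esq v) := by
  have h1 : Real.sqrt (esq (A *ᵥ v)) ≤ Real.sqrt (C ^ 2 * esq v) := Real.sqrt_le_sqrt (h v)
  rwa [Real.sqrt_mul (by positivity), Real.sqrt_sq hC] at h1

lemma gd_of_sqrt {m : Type*} [Fintype m] {A : Matrix m m ℂ} {C : ℝ} (hC : 0 ≤ C)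
    (h : ∀ v : m → ℂ, Real.sqrt (esq (A *ᵥ v)) ≤ C * Real.sqrt (esq v)) : gd A C := by
  intro v
  have h1 := h v
  have h2 : (Real.sqrt (esq (A *ᵥ v))) ^ 2 ≤ (C * Real.sqrt (esq v)) ^ 2 := by
    have := Real.sqrt_nonneg (esq (A *ᵥ v)); nlinarith
  rw [Real.sq_sqrt (esq_nonneg _), mul_pow, Real.sq_sqrt (esq_nonneg _)] at h2
  exact h2

lemma gd_of_spectralNorm_le {m : Type*} [Fintype m] {A : Matrix m m ℂ} {C : ℝ}
    (hC : 0 ≤ C) (h : spectralNormM A ≤ C) : gd A C := by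
  intro v
  by_cases hv : v = 0
  · subst hv; simp [Matrix.mulVec_zero, esq]
  · have hF : (0:ℝ) ≤ Real.sqrt (∑ i, ∑ j, ‖A i j‖ ^ 2) := Real.sqrt_nonneg _
    have hbdd : BddAbove {r : ℝ | ∃ x : m → ℂ, x ≠ 0 ∧
        r = Real.sqrt (∑ i, ‖(A *ᵥ x) i‖ ^ 2) / Real.sqrt (∑ j, ‖x j‖ ^ 2)} := by
      refine ⟨Real.sqrt (∑ i, ∑ j, ‖A i j‖ ^ 2), fun r hr => ?_⟩
      obtain ⟨x, hx, rfl⟩ := hr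
      show Real.sqrt (esq (A *ᵥ x)) / Real.sqrt (esq x) ≤ _
      have h2 := gd_sqrt hF (frobenius_gd A) x
      rw [div_le_iff₀ (Real.sqrt_pos.mpr (esq_pos hx))]
      exact h2
    have hmem : Real.sqrt (esq (A *ᵥ v)) / Real.sqrt (esq v) ≤ spectralNormM A :=
      le_csSup hbdd ⟨v, hv, rfl⟩
    have hv' : 0 < Real.sqrt (esq v) := Real.sqrt_pos.mpr (esq_pos hv)
    rw [div_le_iff₀ hv'] at hmem
    have h2 : Real.sqrt (esq (A *ᵥ v)) ≤ C * Real.sqrt (esq v) :=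
      hmem.trans (by gcongr)
    have h3 : (Real.sqrt (esq (A *ᵥ v))) ^ 2 ≤ (C * Real.sqrt (esq v)) ^ 2 := by
      have := Real.sqrt_nonneg (esq (A *ᵥ v)); nlinarith
    rw [Real.sq_sqrt (esq_nonneg _), mul_pow, Real.sq_sqrt (esq_nonneg _)] at h3
    exact h3

lemma conj_mul_self (z : ℂ) : (starRingEnd ℂ) z * z = (‖z‖^2 : ℝ) := by
  rw [mul_comm, Complex.mul_conj']; norm_cast

lemma gd_conjTranspose {m : Type*} [Fintype m] {A : Matrix m m ℂ} {C : ℝ}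
    (hC : 0 ≤ C) (h : gd A C) : gd Aᴴ C := by
  apply gd_of_sqrt hC
  intro x
  set y := Aᴴ *ᵥ x with hy
  by_cases hy0 : y = 0
  · rw [hy0]; simp only [esq]; simp
    positivity
  · have key : ((esq y : ℝ) : ℂ) = ∑ j, (starRingEnd ℂ) ((A *ᵥ y) j) * x j := by
      have l1 : ((esq y : ℝ) : ℂ) = ∑ k, (starRingEnd ℂ) (y k) * y k := by
        unfold esq
        push_cast
        exact Finset.sum_congr rfl fun k _ => by rw [conj_mul_self]; norm_cast
      rw [l1]
      calc ∑ k, (starRingEnd ℂ) (y k) * y k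
          = ∑ k, ∑ j, (starRingEnd ℂ) (y k) * ((starRingEnd ℂ) (A j k) * x j) := by
            refine Finset.sum_congr rfl fun k _ => ?_
            nth_rewrite 2 [hy]
            have : (Aᴴ *ᵥ x) k = ∑ j, (starRingEnd ℂ) (A j k) * x j := by
              simp [Matrix.mulVec, dotProduct, Matrix.conjTranspose_apply]
            rw [this, Finset.mul_sum]
        _ = ∑ j, ∑ k, (starRingEnd ℂ) (y k) * ((starRingEnd ℂ) (A j k) * x j) :=
            Finset.sum_comm
        _ = ∑ j, (starRingEnd ℂ) ((A *ᵥ y) j) * x j := by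
            refine Finset.sum_congr rfl fun j _ => ?_
            have : (A *ᵥ y) j = ∑ k, A j k * y k := rfl
            rw [this, map_sum, Finset.sum_mul]
            exact Finset.sum_congr rfl fun k _ => by rw [_root_.map_mul]; ring
    have h3 : esq y = (∑ j, (starRingEnd ℂ) ((A *ᵥ y) j) * x j).re := by
      rw [← key, Complex.ofReal_re]
    have h4 : esq y ≤ ‖∑ j, (starRingEnd ℂ) ((A *ᵥ y) j) * x j‖ := by
      rw [h3]; exact Complex.re_le_norm _
    have h5 : ‖∑ j, (starRingEnd ℂ) ((A *ᵥ y) j) * x j‖ ≤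
        Real.sqrt (esq (A *ᵥ y)) * Real.sqrt (esq x) := by
      have := norm_inner_le_norm (𝕜 := ℂ)
        ((WithLp.equiv 2 (m → ℂ)).symm (A *ᵥ y)) ((WithLp.equiv 2 (m → ℂ)).symm x)
      rw [PiLp.inner_apply] at this
      simp only [RCLike.inner_apply, WithLp.equiv_symm_apply, PiLp.toLp_apply] at this
      rw [EuclideanSpace.norm_eq, EuclideanSpace.norm_eq] at this
      simp only [WithLp.equiv_symm_apply, PiLp.toLp_apply] at this
      simpa only [mul_comm, esq] using this
    have h6 : Real.sqrt (esq (A *ᵥ y)) ≤ C * Real.sqrt (esq y) := gd_sqrt hC h y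
    have hs : 0 < Real.sqrt (esq y) := Real.sqrt_pos.mpr (esq_pos hy0)
    have h7 : esq y = Real.sqrt (esq y) ^ 2 := (Real.sq_sqrt (esq_nonneg y)).symm
    nlinarith [Real.sqrt_nonneg (esq x), Real.sqrt_nonneg (esq y)]

lemma gd_pow {m : Type*} [Fintype m] [DecidableEq m] {A : Matrix m m ℂ} {C : ℝ}
    (hC : 0 ≤ C) (h : gd A C) : ∀ k : ℕ, gd (A ^ k) (C ^ k) := by
  intro k
  induction k with
  | zero => intro v; simp [Matrix.one_mulVec, esq]
  | succ n ih =>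
      intro v
      rw [pow_succ, ← Matrix.mulVec_mulVec]
      calc esq (A ^ n *ᵥ A *ᵥ v) ≤ (C ^ n) ^ 2 * esq (A *ᵥ v) := ih _
        _ ≤ (C ^ n) ^ 2 * (C ^ 2 * esq v) := by
            have := h v; nlinarith [esq_nonneg (A *ᵥ v), sq_nonneg (C ^ n)]
        _ = (C ^ (n+1)) ^ 2 * esq v := by ring

lemma esq_smul {m : Type*} [Fintype m] (c : ℂ) (v : m → ℂ) :
    esq (c • v) = ‖c‖ ^ 2 * esq v := by
  unfold esq
  rw [Finset.mul_sum]
  exact Finset.sum_congr rfl fun k _ => by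
    simp [norm_mul]; ring

lemma enorm_eq {m : Type*} [Fintype m] (w : m → ℂ) :
    ‖(WithLp.equiv 2 (m → ℂ)).symm w‖ = Real.sqrt (esq w) := by
  rw [EuclideanSpace.norm_eq]
  simp only [WithLp.equiv_symm_apply, PiLp.toLp_apply]
  rfl

lemma mexp_summable {m : Type*} [Fintype m] [DecidableEq m] {A : Matrix m m ℂ} {C : ℝ}
    (hC : 0 ≤ C) (h : gd A C) :
    Summable (fun k : ℕ => ((k.factorial : ℂ)⁻¹) • A ^ k) := by
  apply Pi.summable.mpr; intro i; apply Pi.summable.mpr; intro j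
  apply Summable.of_norm
  refine Summable.of_nonneg_of_le (fun k => norm_nonneg _) (fun k => ?_)
    (Real.summable_pow_div_factorial C)
  have hb : ‖(A ^ k) i j‖ ^ 2 ≤ (C ^ k) ^ 2 := gd_entry_bound (gd_pow hC h k) i j
  have hb2 : ‖(A ^ k) i j‖ ≤ C ^ k := by
    nlinarith [norm_nonneg ((A ^ k) i j), pow_nonneg hC k]
  have : ‖(((k.factorial : ℂ)⁻¹ • A ^ k)) i j‖ = ((k.factorial : ℝ))⁻¹ * ‖(A ^ k) i j‖ := by
    simp [Matrix.smul_apply, norm_mul]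
  rw [this, div_eq_inv_mul]
  gcongr


lemma tsum_mulVec_sqrt_le {m : Type*} [Fintype m] {F : ℕ → Matrix m m ℂ}
    (hs : Summable F) (v : m → ℂ) {b : ℕ → ℝ}
    (hb : ∀ k, Real.sqrt (esq (F k *ᵥ v)) ≤ b k) (hbs : Summable b) :
    Real.sqrt (esq ((∑' k, F k) *ᵥ v)) ≤ ∑' k, b k := by
  let Φ₀ : Matrix m m ℂ →ₗ[ℂ] EuclideanSpace ℂ m := {
    toFun := fun M => (WithLp.equiv 2 (m → ℂ)).symm (M *ᵥ v)
    map_add' := fun M N => by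
      simp only [Matrix.add_mulVec]; rfl
    map_smul' := fun c M => by
      simp only [Matrix.smul_mulVec, RingHom.id_apply]; rfl }
  let Φ := LinearMap.toContinuousLinearMap Φ₀
  have hmap : Φ (∑' k, F k) = ∑' k, Φ (F k) := Φ.map_tsum hs
  have hΦ : ∀ M, Φ M = (WithLp.equiv 2 (m → ℂ)).symm (M *ᵥ v) := fun M => rfl
  have hnorm : ∀ k, ‖Φ (F k)‖ ≤ b k := fun k => by rw [hΦ, enorm_eq]; exact hb k
  have hsumnorm : Summable (fun k => ‖Φ (F k)‖) :=
    Summable.of_nonneg_of_le (fun k => norm_nonneg _) hnorm hbs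
  calc Real.sqrt (esq ((∑' k, F k) *ᵥ v)) = ‖Φ (∑' k, F k)‖ := by rw [hΦ, enorm_eq]
    _ = ‖∑' k, Φ (F k)‖ := by rw [hmap]
    _ ≤ ∑' k, ‖Φ (F k)‖ := norm_tsum_le_tsum_norm hsumnorm
    _ ≤ ∑' k, b k := Summable.tsum_le_tsum hnorm hsumnorm hbs

lemma exp_tsum_pow_div : ∀ C : ℝ, ∑' k : ℕ, C ^ k / (k.factorial : ℝ) = Real.exp C := by
  intro C
  rw [Real.exp_eq_exp_ℝ, NormedSpace.exp_eq_tsum_div]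

lemma exp_tsum_shift (C : ℝ) :
    ∑' k : ℕ, C ^ (k + 1) / ((k + 1).factorial : ℝ) = Real.exp C - 1 := by
  have hs := Real.summable_pow_div_factorial C
  have h0 := Summable.tsum_eq_zero_add hs
  rw [exp_tsum_pow_div] at h0
  simp only [pow_zero, Nat.factorial_zero, Nat.cast_one, div_one] at h0
  linarith

lemma gd_term_bound {m : Type*} [Fintype m] [DecidableEq m] {A : Matrix m m ℂ} {C : ℝ}
    (hC : 0 ≤ C) (h : gd A C) (v : m → ℂ) (k : ℕ) :
    Real.sqrt (esq ((((k.factorial : ℂ)⁻¹) • A ^ k) *ᵥ v))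
      ≤ C ^ k / (k.factorial : ℝ) * Real.sqrt (esq v) := by
  rw [Matrix.smul_mulVec, esq_smul, Real.sqrt_mul (by positivity),
    Real.sqrt_sq (norm_nonneg _)]
  have h1 : ‖((k.factorial : ℂ))⁻¹‖ = ((k.factorial : ℝ))⁻¹ := by simp
  rw [h1]
  have h2 := gd_sqrt (pow_nonneg hC k) (gd_pow hC h k) v
  calc ((k.factorial : ℝ))⁻¹ * Real.sqrt (esq ((A ^ k) *ᵥ v))
      ≤ ((k.factorial : ℝ))⁻¹ * (C ^ k * Real.sqrt (esq v)) :=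
        mul_le_mul_of_nonneg_left h2 (by positivity)
    _ = C ^ k / (k.factorial : ℝ) * Real.sqrt (esq v) := by ring

lemma gd_mexp {m : Type*} [Fintype m] [DecidableEq m] {A : Matrix m m ℂ} {C : ℝ}
    (hC : 0 ≤ C) (h : gd A C) : gd (mexp A) (Real.exp C) := by
  apply gd_of_sqrt (Real.exp_pos C).le
  intro v
  have hs := mexp_summable hC h
  have hb := fun k => gd_term_bound hC h v k
  have hbs : Summable (fun k : ℕ => C ^ k / (k.factorial : ℝ) * Real.sqrt (esq v)) :=
    (Real.summable_pow_div_factorial C).mul_right _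
  have hmain := tsum_mulVec_sqrt_le hs v hb hbs
  rw [tsum_mul_right, exp_tsum_pow_div] at hmain
  unfold mexp
  exact hmain

set_option maxHeartbeats 1000000 in
lemma gd_mexp_sub_one {m : Type*} [Fintype m] [DecidableEq m] {A : Matrix m m ℂ} {C : ℝ}
    (hC : 0 ≤ C) (h : gd A C) : gd (mexp A - 1) (Real.exp C - 1) := by
  apply gd_of_sqrt (by nlinarith [Real.one_le_exp hC])
  intro v
  have hs := mexp_summable hC h
  have hshift : mexp A - 1 = ∑' k : ℕ, (((k + 1).factorial : ℂ)⁻¹) • A ^ (k + 1) := by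
    unfold mexp
    rw [Summable.tsum_eq_zero_add hs]
    simp only [pow_zero, Nat.factorial_zero, Nat.cast_one, inv_one, one_smul]
    abel
  have hsF : Summable (fun k : ℕ => (((k + 1).factorial : ℂ)⁻¹) • A ^ (k + 1)) :=
    (summable_nat_add_iff 1).mpr hs
  have hb := fun k : ℕ => gd_term_bound hC h v (k + 1)
  have hbs : Summable (fun k : ℕ => C ^ (k + 1) / ((k + 1).factorial : ℝ) * Real.sqrt (esq v)) :=
    (((summable_nat_add_iff 1).mpr (Real.summable_pow_div_factorial C))).mul_right _
  have hmain := tsum_mulVec_sqrt_le hsF v hb hbs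
  rw [tsum_mul_right, exp_tsum_shift, ← hshift] at hmain
  exact hmain


noncomputable def pq {S : Type*} [Fintype S] (π : S → ℝ) (x : S → ℂ) : ℝ :=
  ∑ i, ‖x i‖ ^ 2 / π i

lemma pq_nonneg {S : Type*} [Fintype S] {π : S → ℝ} (hpos : ∀ i, 0 < π i) (x : S → ℂ) :
    0 ≤ pq π x :=
  Finset.sum_nonneg fun i _ => div_nonneg (by positivity) (hpos i).le

lemma pq_pos {S : Type*} [Fintype S] {π : S → ℝ} (hpos : ∀ i, 0 < π i) {x : S → ℂ}
    (hx : x ≠ 0) : 0 < pq π x := by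
  rcases (pq_nonneg hpos x).lt_or_eq with h | h
  · exact h
  · exfalso; apply hx
    funext i
    have := (Finset.sum_eq_zero_iff_of_nonneg
      (fun i _ => div_nonneg (by positivity) (hpos i).le)).mp h.symm i (Finset.mem_univ i)
    have h2 : ‖x i‖ ^ 2 = 0 := by
      rcases div_eq_zero_iff.mp this with h' | h'
      · exact h'
      · exact absurd h' (hpos i).ne'
    have h3 : ‖x i‖ = 0 := by nlinarith [norm_nonneg (x i)]
    simpa using h3

lemma Pt_mulVec_apply {S : Type*} [Fintype S] (P : Matrix S S ℝ) (x : S → ℂ) (j : S) :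
    ((P.map Complex.ofReal)ᵀ *ᵥ x) j = ∑ i, (P i j : ℂ) * x i := by
  simp [Matrix.mulVec, dotProduct, Matrix.transpose_apply, Matrix.map_apply]

lemma contraction_pq {S : Type*} [Fintype S] {P : Matrix S S ℝ} {π : S → ℝ}
    (hpos : ∀ i, 0 < π i) (hPnn : ∀ i j, 0 ≤ P i j) (hrow : ∀ i, ∑ j, P i j = 1)
    (hstat : ∀ j, ∑ i, π i * P i j = π j) (x : S → ℂ) :
    pq π ((P.map Complex.ofReal)ᵀ *ᵥ x) ≤ pq π x := by
  calc pq π ((P.map Complex.ofReal)ᵀ *ᵥ x)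
      = ∑ j, ‖∑ i, (P i j : ℂ) * x i‖ ^ 2 / π j := by
        unfold pq
        exact Finset.sum_congr rfl fun j _ => by rw [Pt_mulVec_apply]
    _ ≤ ∑ j, ∑ i, P i j * (‖x i‖ ^ 2 / π i) := by
        refine Finset.sum_le_sum fun j _ => ?_
        have t1 : ‖∑ i, (P i j : ℂ) * x i‖ ≤ ∑ i, P i j * ‖x i‖ := by
          refine (norm_sum_le _ _).trans ?_
          refine Finset.sum_le_sum fun i _ => ?_
          rw [norm_mul, Complex.norm_real, Real.norm_eq_abs, abs_of_nonneg (hPnn i j)]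
        have t2 : (∑ i, P i j * ‖x i‖) ^ 2 ≤
            (∑ i, P i j * π i) * (∑ i, P i j * (‖x i‖ ^ 2 / π i)) :=
          Finset.sum_sq_le_sum_mul_sum_of_sq_eq_mul _
            (fun i _ => mul_nonneg (hPnn i j) (hpos i).le)
            (fun i _ => mul_nonneg (hPnn i j) (div_nonneg (by positivity) (hpos i).le))
            (fun i _ => by
              have hπ := (hpos i).ne'
              field_simp)
        have t3 : ∑ i, P i j * π i = π j := by
          rw [← hstat j]; exact Finset.sum_congr rfl fun i _ => mul_comm _ _
        rw [t3] at t2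
        have t4 : ‖∑ i, (P i j : ℂ) * x i‖ ^ 2 ≤ (∑ i, P i j * ‖x i‖) ^ 2 := by
          have hnn : (0:ℝ) ≤ ∑ i, P i j * ‖x i‖ :=
            Finset.sum_nonneg fun i _ => mul_nonneg (hPnn i j) (norm_nonneg _)
          nlinarith [norm_nonneg (∑ i, (P i j : ℂ) * x i)]
        rw [div_le_iff₀ (hpos j)]
        nlinarith
    _ = ∑ i, ∑ j, P i j * (‖x i‖ ^ 2 / π i) := Finset.sum_comm
    _ = pq π x := by
        unfold pq
        refine Finset.sum_congr rfl fun i _ => ?_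
        rw [← Finset.sum_mul, hrow i, one_mul]

lemma specExp_nonneg {S : Type*} [Fintype S] (P : Matrix S S ℝ) (π : S → ℝ) :
    0 ≤ specExp P π := by
  apply Real.sSup_nonneg
  rintro r ⟨x, hx, -, rfl⟩
  unfold piNorm
  positivity

lemma specExp_bound {S : Type*} [Fintype S] {P : Matrix S S ℝ} {π : S → ℝ}
    (hpos : ∀ i, 0 < π i) (hPnn : ∀ i j, 0 ≤ P i j) (hrow : ∀ i, ∑ j, P i j = 1)
    (hstat : ∀ j, ∑ i, π i * P i j = π j) (x : S → ℂ) (hx : ∑ i, x i = 0) :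
    Real.sqrt (pq π ((P.map Complex.ofReal)ᵀ *ᵥ x)) ≤
      specExp P π * Real.sqrt (pq π x) := by
  by_cases hx0 : x = 0
  · subst hx0
    simp only [Matrix.mulVec_zero]
    have : pq π (0 : S → ℂ) = 0 := by unfold pq; simp
    rw [this, Real.sqrt_zero, mul_zero]
  · have horth : piInner π x (fun i => (π i : ℂ)) = 0 := by
      unfold piInner
      calc ∑ i, (starRingEnd ℂ) ((π i : ℂ)) * x i / (π i : ℂ)
          = ∑ i, x i := by
            refine Finset.sum_congr rfl fun i _ => ?_
            rw [Complex.conj_ofReal]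
            rw [mul_comm, mul_div_assoc, div_self (Complex.ofReal_ne_zero.mpr (hpos i).ne'),
              mul_one]
        _ = 0 := hx
    have hbdd : BddAbove {r : ℝ | ∃ y : S → ℂ, y ≠ 0 ∧ piInner π y (fun i => (π i : ℂ)) = 0 ∧
        r = piNorm π ((P.map Complex.ofReal)ᵀ *ᵥ y) / piNorm π y} := by
      refine ⟨1, ?_⟩
      rintro r ⟨y, hy, -, rfl⟩
      have hc := contraction_pq hpos hPnn hrow hstat y
      have hpy : 0 < Real.sqrt (pq π y) := Real.sqrt_pos.mpr (pq_pos hpos hy)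
      show Real.sqrt (pq π ((P.map Complex.ofReal)ᵀ *ᵥ y)) / Real.sqrt (pq π y) ≤ 1
      rw [div_le_one hpy]
      exact Real.sqrt_le_sqrt hc
    have hmem : Real.sqrt (pq π ((P.map Complex.ofReal)ᵀ *ᵥ x)) / Real.sqrt (pq π x) ≤
        specExp P π :=
      le_csSup hbdd ⟨x, hx0, horth, rfl⟩
    have hpx : 0 < Real.sqrt (pq π x) := Real.sqrt_pos.mpr (pq_pos hpos hx0)
    rw [div_le_iff₀ hpx] at hmem
    exact hmem

section KronHelpers

variable {N m : ℕ}

noncomputable def Qk (π : Fin N → ℝ) (x : Fin N × Fin m → ℂ) : ℝ :=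
  ∑ p, ‖x p‖ ^ 2 / π p.1

lemma piNormKron_eq (π : Fin N → ℝ) (x : Fin N × Fin m → ℂ) :
    piNormKron π x = Real.sqrt (Qk π x) := rfl

lemma Qk_nonneg {π : Fin N → ℝ} (hpos : ∀ i, 0 < π i) (x : Fin N × Fin m → ℂ) :
    0 ≤ Qk π x :=
  Finset.sum_nonneg fun p _ => div_nonneg (by positivity) (hpos p.1).le

lemma Qk_split (π : Fin N → ℝ) (x : Fin N × Fin m → ℂ) :
    Qk π x = ∑ i, esq (fun k => x (i, k)) / π i := by
  unfold Qk esq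
  rw [Fintype.sum_prod_type]
  refine Finset.sum_congr rfl fun i _ => ?_
  show (∑ k : Fin m, ‖x (i, k)‖ ^ 2 / π i) = _
  rw [← Finset.sum_div]

lemma Qk_col (π : Fin N → ℝ) (x : Fin N × Fin m → ℂ) :
    Qk π x = ∑ k, pq π (fun i => x (i, k)) := by
  unfold Qk pq
  rw [Fintype.sum_prod_type, Finset.sum_comm]

lemma kron_Pt_apply (P : Matrix (Fin N) (Fin N) ℝ) (x : Fin N × Fin m → ℂ)
    (p : Fin N × Fin m) :
    (((P.map Complex.ofReal) ⊗ₖ (1 : Matrix (Fin m) (Fin m) ℂ))ᵀ *ᵥ x) p =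
      ∑ i, (P i p.1 : ℂ) * x (i, p.2) := by
  obtain ⟨j, k⟩ := p
  show ∑ q : Fin N × Fin m, _ = _
  rw [Fintype.sum_prod_type]
  refine Finset.sum_congr rfl fun i _ => ?_
  rw [Finset.sum_eq_single k]
  · simp [Matrix.kroneckerMap_apply, Matrix.one_apply, Matrix.map_apply]
  · intro l _ hl
    simp [Matrix.kroneckerMap_apply, Matrix.one_apply, hl, Matrix.map_apply]
  · simp

lemma blockDiag'_conjT_apply (M : Fin N → Matrix (Fin m) (Fin m) ℂ)
    (x : Fin N × Fin m → ℂ) (p : Fin N × Fin m) :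
    ((_root_.blockDiag' M)ᴴ *ᵥ x) p = ((M p.1)ᴴ *ᵥ fun l => x (p.1, l)) p.2 := by
  obtain ⟨i, k⟩ := p
  have hentry : ∀ q : Fin N × Fin m, (_root_.blockDiag' M)ᴴ (i, k) q * x q =
      if q.1 = i then (starRingEnd ℂ) (M i q.2 k) * x q else 0 := by
    rintro ⟨j, l⟩
    by_cases hj : j = i
    · subst hj
      simp [Matrix.conjTranspose_apply, _root_.blockDiag']
    · simp [Matrix.conjTranspose_apply, _root_.blockDiag', hj]
  calc ((_root_.blockDiag' M)ᴴ *ᵥ x) (i, k)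
      = ∑ q : Fin N × Fin m, (_root_.blockDiag' M)ᴴ (i, k) q * x q := rfl
    _ = ∑ q : Fin N × Fin m, if q.1 = i then (starRingEnd ℂ) (M i q.2 k) * x q else 0 :=
        Finset.sum_congr rfl fun q _ => hentry q
    _ = ∑ j, ∑ l, if j = i then (starRingEnd ℂ) (M i l k) * x (j, l) else 0 := by
        rw [Fintype.sum_prod_type]
    _ = ∑ l, (starRingEnd ℂ) (M i l k) * x (i, l) := by
        rw [Finset.sum_eq_single i]
        · simp
        · intro j _ hj
          simp [hj]
        · simp
    _ = ((M i)ᴴ *ᵥ fun l => x (i, l)) k := by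
        simp [Matrix.mulVec, dotProduct, Matrix.conjTranspose_apply]

lemma colzero_perp {π : Fin N → ℝ} (hpos : ∀ i, 0 < π i) {x : Fin N × Fin m → ℂ}
    (h : ∀ k, ∑ i, x (i, k) = 0) : perpU π x := by
  intro w
  unfold piInnerKron
  calc ∑ p : Fin N × Fin m, (starRingEnd ℂ) ((π p.1 : ℂ) * w p.2) * x p / (π p.1 : ℂ)
      = ∑ p : Fin N × Fin m, (starRingEnd ℂ) (w p.2) * x p := by
        refine Finset.sum_congr rfl fun p _ => ?_
        have hπ : (π p.1 : ℂ) ≠ 0 := Complex.ofReal_ne_zero.mpr (hpos p.1).ne'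
        rw [_root_.map_mul, Complex.conj_ofReal]
        field_simp
    _ = ∑ i, ∑ k, (starRingEnd ℂ) (w k) * x (i, k) := by rw [Fintype.sum_prod_type]
    _ = ∑ k, ∑ i, (starRingEnd ℂ) (w k) * x (i, k) := Finset.sum_comm
    _ = 0 := by
        refine Finset.sum_eq_zero fun k _ => ?_
        rw [← Finset.mul_sum, h k, mul_zero]

lemma norm_add_sq_complex (u v : ℂ) :
    ‖u + v‖ ^ 2 = ‖u‖ ^ 2 + ‖v‖ ^ 2 + 2 * ((starRingEnd ℂ) u * v).re := by
  have h1 : ∀ z : ℂ, ‖z‖ ^ 2 = Complex.normSq z := fun z => by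
    rw [Complex.sq_norm]
  rw [h1, h1, h1, Complex.normSq_add]
  have h2 : (u * (starRingEnd ℂ) v).re = ((starRingEnd ℂ) u * v).re := by
    simp [Complex.mul_re]
  rw [h2]

lemma pyth {π : Fin N → ℝ} (hpos : ∀ i, 0 < π i) {a b : Fin N × Fin m → ℂ}
    (ha : memU π a) (hb : perpU π b) : Qk π (a + b) = Qk π a + Qk π b := by
  obtain ⟨w, hw⟩ := ha
  have key : ∑ p, (starRingEnd ℂ) (a p) * b p / (π p.1 : ℂ) = 0 := by
    have := hb w
    unfold piInnerKron at this
    rw [← this]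
    exact Finset.sum_congr rfl fun p _ => by rw [hw p]
  have keyre : (∑ p, ((starRingEnd ℂ) (a p) * b p).re / π p.1) = 0 := by
    have : (∑ p, (starRingEnd ℂ) (a p) * b p / (π p.1 : ℂ)).re = 0 := by rw [key]; rfl
    rw [Complex.re_sum] at this
    rw [← this]
    exact Finset.sum_congr rfl fun p _ => (Complex.div_ofReal_re _ _).symm
  unfold Qk
  have expand : ∀ p : Fin N × Fin m,
      ‖(a + b) p‖ ^ 2 / π p.1 = ‖a p‖ ^ 2 / π p.1 + ‖b p‖ ^ 2 / π p.1 +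
        2 * (((starRingEnd ℂ) (a p) * b p).re / π p.1) := by
    intro p
    have : (a + b) p = a p + b p := rfl
    rw [this, norm_add_sq_complex]
    have hπ : π p.1 ≠ 0 := (hpos p.1).ne'
    field_simp
  rw [Finset.sum_congr rfl fun p _ => expand p]
  rw [Finset.sum_add_distrib, Finset.sum_add_distrib, ← Finset.mul_sum, keyre]
  ring

lemma perp_min {π : Fin N → ℝ} (hpos : ∀ i, 0 < π i) {a b : Fin N × Fin m → ℂ}
    (ha : memU π a) (hb : perpU π b) : Qk π b ≤ Qk π (a + b) := by
  rw [pyth hpos ha hb]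
  have := Qk_nonneg hpos a
  linarith

lemma sqrtQk_triangle {π : Fin N → ℝ} (hpos : ∀ i, 0 < π i) (a b : Fin N × Fin m → ℂ) :
    Real.sqrt (Qk π (a + b)) ≤ Real.sqrt (Qk π a) + Real.sqrt (Qk π b) := by
  have hnorm : ∀ x : Fin N × Fin m → ℂ,
      ‖(WithLp.equiv 2 (Fin N × Fin m → ℂ)).symm
        (fun p => (((Real.sqrt (π p.1))⁻¹ : ℝ) : ℂ) * x p)‖ = Real.sqrt (Qk π x) := by
    intro x
    rw [EuclideanSpace.norm_eq]
    congr 1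
    unfold Qk
    refine Finset.sum_congr rfl fun p _ => ?_
    simp only [WithLp.equiv_symm_apply, PiLp.toLp_apply]
    rw [norm_mul, Complex.norm_real, Real.norm_eq_abs,
      abs_of_nonneg (by positivity), mul_pow, inv_pow, Real.sq_sqrt (hpos p.1).le,
      div_eq_inv_mul]
  have hfun : (fun p : Fin N × Fin m => (((Real.sqrt (π p.1))⁻¹ : ℝ) : ℂ) * (a + b) p) =
      (fun p => (((Real.sqrt (π p.1))⁻¹ : ℝ) : ℂ) * a p) +
        (fun p => (((Real.sqrt (π p.1))⁻¹ : ℝ) : ℂ) * b p) := by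
    funext p
    show _ = _ * a p + _ * b p
    show (((Real.sqrt (π p.1))⁻¹ : ℝ) : ℂ) * (a p + b p) = _
    ring
  have := norm_add_le ((WithLp.equiv 2 (Fin N × Fin m → ℂ)).symm
      (fun p => (((Real.sqrt (π p.1))⁻¹ : ℝ) : ℂ) * a p))
    ((WithLp.equiv 2 (Fin N × Fin m → ℂ)).symm
      (fun p => (((Real.sqrt (π p.1))⁻¹ : ℝ) : ℂ) * b p))
  rw [WithLp.equiv_symm_apply, ← WithLp.toLp_add, ← hfun] at this
  rw [← hnorm, ← hnorm, ← hnorm]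
  exact this

end KronHelpers

section Glue

variable {N m : ℕ}

lemma memU_sub {π : Fin N → ℝ} {a b : Fin N × Fin m → ℂ}
    (ha : memU π a) (hb : memU π b) : memU π (a - b) := by
  obtain ⟨wa, hwa⟩ := ha
  obtain ⟨wb, hwb⟩ := hb
  exact ⟨wa - wb, fun p => by rw [Pi.sub_apply, hwa p, hwb p, Pi.sub_apply]; ring⟩

lemma Pt_fix {P : Matrix (Fin N) (Fin N) ℝ} {π : Fin N → ℝ}
    (hstat : ∀ j, ∑ i, π i * P i j = π j) (w : Fin m → ℂ) :
    (((P.map Complex.ofReal) ⊗ₖ (1 : Matrix (Fin m) (Fin m) ℂ))ᵀ *ᵥ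
      fun p => (π p.1 : ℂ) * w p.2) = fun p => (π p.1 : ℂ) * w p.2 := by
  funext p
  rw [kron_Pt_apply]
  have h1 : ∀ i : Fin N, (P i p.1 : ℂ) * ((π i : ℂ) * w p.2) =
      ((π i * P i p.1 : ℝ) : ℂ) * w p.2 := fun i => by push_cast; ring
  rw [Finset.sum_congr rfl fun i _ => h1 i, ← Finset.sum_mul]
  have h2 : (∑ i, ((π i * P i p.1 : ℝ) : ℂ)) = ((π p.1 : ℝ) : ℂ) := by
    rw [← Complex.ofReal_sum, hstat p.1]
  rw [h2]

lemma Qk_block_bound {π : Fin N → ℝ} (hpos : ∀ i, 0 < π i)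
    {B : Fin N → Matrix (Fin m) (Fin m) ℂ} {D : ℝ} (hD : 0 ≤ D)
    (hB : ∀ i, gd (B i) D) {x y : Fin N × Fin m → ℂ}
    (hy : ∀ p : Fin N × Fin m, y p = (B p.1 *ᵥ fun l => x (p.1, l)) p.2) :
    Real.sqrt (Qk π y) ≤ D * Real.sqrt (Qk π x) := by
  have hsq : Qk π y ≤ D ^ 2 * Qk π x := by
    rw [Qk_split, Qk_split, Finset.mul_sum]
    refine Finset.sum_le_sum fun i _ => ?_
    have he : esq (fun k => y (i, k)) = esq (B i *ᵥ fun l => x (i, l)) := by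
      unfold esq
      exact Finset.sum_congr rfl fun k _ => by
        show ‖y (i, k)‖ ^ 2 = _
        rw [hy (i, k)]
    rw [he, show D ^ 2 * (esq (fun k => x (i, k)) / π i) =
      (D ^ 2 * esq (fun k => x (i, k))) / π i from (mul_div_assoc _ _ _).symm]
    have hple := (hpos i).le
    gcongr
    exact hB i _
  calc Real.sqrt (Qk π y) ≤ Real.sqrt (D ^ 2 * Qk π x) := Real.sqrt_le_sqrt hsq
    _ = D * Real.sqrt (Qk π x) := by
        rw [Real.sqrt_mul (by positivity), Real.sqrt_sq hD]

lemma Qk_Pt_bound {P : Matrix (Fin N) (Fin N) ℝ} {π : Fin N → ℝ}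
    (hpos : ∀ i, 0 < π i) (hPnn : ∀ i j, 0 ≤ P i j) (hrow : ∀ i, ∑ j, P i j = 1)
    (hstat : ∀ j, ∑ i, π i * P i j = π j) {x : Fin N × Fin m → ℂ}
    (hcol : ∀ k, ∑ i, x (i, k) = 0) :
    Real.sqrt (Qk π (((P.map Complex.ofReal) ⊗ₖ (1 : Matrix (Fin m) (Fin m) ℂ))ᵀ *ᵥ x)) ≤
      specExp P π * Real.sqrt (Qk π x) := by
  have hL := specExp_nonneg P π
  have hsq : Qk π (((P.map Complex.ofReal) ⊗ₖ (1 : Matrix (Fin m) (Fin m) ℂ))ᵀ *ᵥ x) ≤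
      (specExp P π) ^ 2 * Qk π x := by
    rw [Qk_col, Qk_col, Finset.mul_sum]
    refine Finset.sum_le_sum fun k _ => ?_
    have hcolk : (fun j => (((P.map Complex.ofReal) ⊗ₖ
        (1 : Matrix (Fin m) (Fin m) ℂ))ᵀ *ᵥ x) (j, k)) =
        (P.map Complex.ofReal)ᵀ *ᵥ (fun i => x (i, k)) := by
      funext j
      rw [kron_Pt_apply, Pt_mulVec_apply]
    rw [hcolk]
    have hb := specExp_bound hpos hPnn hrow hstat (fun i => x (i, k)) (hcol k)
    have hA := pq_nonneg hpos ((P.map Complex.ofReal)ᵀ *ᵥ fun i => x (i, k))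
    have hB := pq_nonneg hpos (fun i => x (i, k))
    have s1 := Real.sq_sqrt hA
    have s2 := Real.sq_sqrt hB
    nlinarith [Real.sqrt_nonneg (pq π ((P.map Complex.ofReal)ᵀ *ᵥ fun i => x (i, k))),
      Real.sqrt_nonneg (pq π (fun i => x (i, k)))]
  calc Real.sqrt (Qk π _) ≤ Real.sqrt ((specExp P π) ^ 2 * Qk π x) := Real.sqrt_le_sqrt hsq
    _ = specExp P π * Real.sqrt (Qk π x) := by
        rw [Real.sqrt_mul (by positivity), Real.sqrt_sq hL]

lemma step_bound {P : Matrix (Fin N) (Fin N) ℝ} {π : Fin N → ℝ}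
    (hpos : ∀ i, 0 < π i) (hPnn : ∀ i j, 0 ≤ P i j) (hrow : ∀ i, ∑ j, P i j = 1)
    (hstat : ∀ j, ∑ i, π i * P i j = π j) (hπ1 : ∑ i, π i = 1)
    {H : Fin N → Matrix (Fin m) (Fin m) ℂ} {ℓ t : ℝ} (hl : 0 ≤ ℓ) (ht : 0 < t)
    (hH : ∀ i, spectralNormM (H i) ≤ ℓ)
    {zc zparc zperpc znext zparn zperpn : Fin N × Fin m → ℂ}
    (hdec : zc = zparc + zperpc) (hpar : memU π zparc) (hperp : perpU π zperpc)
    (hdecn : znext = zparn + zperpn) (hparn : memU π zparn) (hperpn : perpU π zperpn)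
    (hrec : znext = ((P.map Complex.ofReal) ⊗ₖ (1 : Matrix (Fin m) (Fin m) ℂ))ᵀ *ᵥ
        ((_root_.blockDiag' fun v => mexp ((t : ℂ) • H v))ᴴ *ᵥ zc)) :
    Real.sqrt (Qk π zperpn) ≤ specExp P π *
      ((Real.exp (t * ℓ) - 1) * Real.sqrt (Qk π zparc) +
        Real.exp (t * ℓ) * Real.sqrt (Qk π zperpc)) := by
  classical
  have htl : 0 ≤ t * ℓ := by positivity
  have hexp1 : (1:ℝ) ≤ Real.exp (t * ℓ) := Real.one_le_exp htl
  have base : ∀ i, gd (H i) ℓ := fun i => gd_of_spectralNorm_le hl (hH i)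
  have gdtH : ∀ i, gd ((t : ℂ) • H i) (t * ℓ) := by
    intro i v
    rw [Matrix.smul_mulVec, esq_smul]
    have hn : ‖((t : ℝ) : ℂ)‖ = t := by
      rw [Complex.norm_real, Real.norm_eq_abs, abs_of_pos ht]
    rw [hn]
    calc t ^ 2 * esq (H i *ᵥ v) ≤ t ^ 2 * (ℓ ^ 2 * esq v) :=
          mul_le_mul_of_nonneg_left (base i v) (by positivity)
      _ = (t * ℓ) ^ 2 * esq v := by ring
  have gdE : ∀ i, gd ((mexp ((t : ℂ) • H i))ᴴ) (Real.exp (t * ℓ)) := fun i =>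
    gd_conjTranspose (Real.exp_pos _).le (gd_mexp htl (gdtH i))
  have gdE1 : ∀ i, gd ((mexp ((t : ℂ) • H i))ᴴ - 1) (Real.exp (t * ℓ) - 1) := by
    intro i
    have h := gd_conjTranspose (by linarith) (gd_mexp_sub_one htl (gdtH i))
    rwa [Matrix.conjTranspose_sub, Matrix.conjTranspose_one] at h
  set E := _root_.blockDiag' fun v => mexp ((t : ℂ) • H v) with hE
  set y : Fin N × Fin m → ℂ := (Eᴴ *ᵥ zc) - zparc with hydef
  set y1 : Fin N × Fin m → ℂ := (Eᴴ *ᵥ zparc) - zparc with hy1def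
  set y2 : Fin N × Fin m → ℂ := Eᴴ *ᵥ zperpc with hy2def
  have hy : y = y1 + y2 := by
    rw [hydef, hy1def, hy2def, hdec, Matrix.mulVec_add]
    funext p
    simp only [Pi.add_apply, Pi.sub_apply]
    ring
  set S : Fin m → ℂ := fun k => ∑ i, y (i, k) with hS
  set proj : Fin N × Fin m → ℂ := fun p => (π p.1 : ℂ) * S p.2 with hproj
  set y0 : Fin N × Fin m → ℂ := y - proj with hy0
  have hcol : ∀ k, ∑ i, y0 (i, k) = 0 := by
    intro k
    have h0 : ∀ i : Fin N, y0 (i, k) = y (i, k) - (π i : ℂ) * S k := fun i => rfl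
    rw [Finset.sum_congr rfl fun i _ => h0 i, Finset.sum_sub_distrib, ← Finset.sum_mul]
    have h1 : (∑ i, (π i : ℂ)) = 1 := by
      rw [← Complex.ofReal_sum, hπ1, Complex.ofReal_one]
    rw [h1, one_mul, hS, sub_self]
  obtain ⟨w, hw⟩ := hpar
  have hzparc : zparc = fun p => (π p.1 : ℂ) * w p.2 := funext hw
  set u : Fin N × Fin m → ℂ := ((P.map Complex.ofReal) ⊗ₖ
      (1 : Matrix (Fin m) (Fin m) ℂ))ᵀ *ᵥ (zparc + proj) with hu
  have hzp : zparc + proj = fun p => (π p.1 : ℂ) * (w p.2 + S p.2) := by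
    funext p
    rw [Pi.add_apply, hw p, hproj]
    ring
  have humem : memU π u := by
    refine ⟨fun k => w k + S k, fun p => ?_⟩
    have h2 := congrFun (Pt_fix (P := P) hstat (fun k => w k + S k)) p
    rw [hu, hzp]
    exact h2
  have hzu : znext - u = ((P.map Complex.ofReal) ⊗ₖ
      (1 : Matrix (Fin m) (Fin m) ℂ))ᵀ *ᵥ y0 := by
    have harg : Eᴴ *ᵥ zc - (zparc + proj) = y0 := by
      funext p
      show (Eᴴ *ᵥ zc) p - (zparc + proj) p = y0 p
      have h3 : y0 p = ((Eᴴ *ᵥ zc) p - zparc p) - proj p := rfl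
      rw [h3, Pi.add_apply]
      ring
    rw [hrec, hu, ← Matrix.mulVec_sub, harg]
  -- perp minimality
  have hmin : Real.sqrt (Qk π zperpn) ≤ Real.sqrt (Qk π (znext - u)) := by
    have hsplit : znext - u = (zparn - u) + zperpn := by
      rw [hdecn]; funext p; simp only [Pi.sub_apply, Pi.add_apply]; ring
    have h1 := perp_min hpos (memU_sub hparn humem) hperpn
    rw [← hsplit] at h1
    exact Real.sqrt_le_sqrt h1
  have hlam : Real.sqrt (Qk π (znext - u)) ≤ specExp P π * Real.sqrt (Qk π y0) := by
    rw [hzu]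
    exact Qk_Pt_bound hpos hPnn hrow hstat hcol
  have hy0y : Real.sqrt (Qk π y0) ≤ Real.sqrt (Qk π y) := by
    have hyeq : y = proj + y0 := by funext p; simp only [Pi.add_apply, Pi.sub_apply, hy0]; ring
    have h1 := perp_min hpos (a := proj) (b := y0) ⟨S, fun p => rfl⟩
      (colzero_perp hpos hcol)
    rw [← hyeq] at h1
    exact Real.sqrt_le_sqrt h1
  have htri : Real.sqrt (Qk π y) ≤ Real.sqrt (Qk π y1) + Real.sqrt (Qk π y2) := by
    rw [hy]
    exact sqrtQk_triangle hpos y1 y2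
  have hb1 : Real.sqrt (Qk π y1) ≤ (Real.exp (t * ℓ) - 1) * Real.sqrt (Qk π zparc) := by
    refine Qk_block_bound hpos (by linarith) gdE1 fun p => ?_
    have hd := blockDiag'_conjT_apply (fun v => mexp ((t : ℂ) • H v)) zparc p
    rw [← hE] at hd
    show (Eᴴ *ᵥ zparc) p - zparc p = _
    rw [hd, Matrix.sub_mulVec, Matrix.one_mulVec]
    rfl
  have hb2 : Real.sqrt (Qk π y2) ≤ Real.exp (t * ℓ) * Real.sqrt (Qk π zperpc) := by
    refine Qk_block_bound hpos (by positivity) gdE fun p => ?_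
    have hd := blockDiag'_conjT_apply (fun v => mexp ((t : ℂ) • H v)) zperpc p
    rw [← hE] at hd
    exact hd
  have hL := specExp_nonneg P π
  calc Real.sqrt (Qk π zperpn) ≤ Real.sqrt (Qk π (znext - u)) := hmin
    _ ≤ specExp P π * Real.sqrt (Qk π y0) := hlam
    _ ≤ specExp P π * (Real.sqrt (Qk π y1) + Real.sqrt (Qk π y2)) := by
        apply mul_le_mul_of_nonneg_left _ hL
        exact hy0y.trans htri
    _ ≤ specExp P π * ((Real.exp (t * ℓ) - 1) * Real.sqrt (Qk π zparc) +
        Real.exp (t * ℓ) * Real.sqrt (Qk π zperpc)) := by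
        apply mul_le_mul_of_nonneg_left _ hL
        exact add_le_add hb1 hb2

end Glue
theorem stmt_16 {N m : ℕ} (hm : 1 ≤ m)
    (P : Matrix (Fin N) (Fin N) ℝ) (π : Fin N → ℝ)
    (hP : IsMarkov P) (hreg : IsRegularMC P) (hπ : IsStationaryMC P π)
    (ℓ t : ℝ) (hℓ : 0 ≤ ℓ) (ht : 0 < t)
    (H : Fin N → Matrix (Fin m) (Fin m) ℂ)
    (hH : ∀ i, spectralNormM (H i) ≤ ℓ)
    (hmean : ∑ i, π i • H i = 0)
    (hα₄ : specExp P π * Real.exp (t * ℓ) < 1)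
    (z zpar zperp : ℕ → (Fin N × Fin m → ℂ))
    (hz0 : memU π (z 0)) (hz0perp : zperp 0 = 0)
    (hrec : ∀ i : ℕ, z (i + 1) =
      ((P.map Complex.ofReal) ⊗ₖ (1 : Matrix (Fin m) (Fin m) ℂ))ᵀ *ᵥ
        ((blockDiag' fun v => mexp ((t : ℂ) • H v))ᴴ *ᵥ z i))
    (hdec : ∀ i, z i = zpar i + zperp i)
    (hpar : ∀ i, memU π (zpar i)) (hperp : ∀ i, perpU π (zperp i)) :
    ∀ (i : ℕ) (hi : 1 ≤ i),
      piNormKron π (zperp i) ≤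
        (specExp P π * (Real.exp (t * ℓ) - 1) / (1 - specExp P π * Real.exp (t * ℓ))) *
          (Finset.range i).sup' (Finset.nonempty_range_iff.mpr (by omega))
            (fun j => piNormKron π (zpar j)) := by
  obtain ⟨hPnn, hrow⟩ := hP
  obtain ⟨hpos, hπ1, hstat⟩ := hπ
  set lam := specExp P π with hlamdef
  set e := Real.exp (t * ℓ) with hedef
  have hL : 0 ≤ lam := specExp_nonneg P π
  have htl : 0 ≤ t * ℓ := by positivity
  have he1 : (1:ℝ) ≤ e := Real.one_le_exp htl
  have hden : 0 < 1 - lam * e := by linarith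
  set L := lam * (e - 1) / (1 - lam * e) with hLdef
  have hLnn : 0 ≤ L := by
    apply div_nonneg
    · nlinarith
    · linarith
  have hpn : ∀ x : Fin N × Fin m → ℂ, 0 ≤ piNormKron π x := fun x => by
    rw [piNormKron_eq]; positivity
  have hstep : ∀ i : ℕ, piNormKron π (zperp (i+1)) ≤
      lam * ((e - 1) * piNormKron π (zpar i) + e * piNormKron π (zperp i)) := by
    intro i
    rw [piNormKron_eq, piNormKron_eq, piNormKron_eq]
    exact step_bound hpos hPnn hrow hstat hπ1 hℓ ht hH (hdec i) (hpar i) (hperp i)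
      (hdec (i+1)) (hpar (i+1)) (hperp (i+1)) (hrec i)
  have hperp0 : piNormKron π (zperp 0) = 0 := by
    rw [hz0perp, piNormKron_eq]
    unfold Qk
    simp
  have hkey : lam * (e - 1) + lam * e * L = L := by
    rw [hLdef]
    field_simp
    ring
  intro i
  induction i with
  | zero => intro hi; omega
  | succ n ih =>
      intro _
      by_cases hn : n = 0
      · subst hn
        have h1 := hstep 0
        rw [hperp0, mul_zero, add_zero] at h1
        have hco : lam * (e - 1) ≤ L := by
          rw [hLdef, le_div_iff₀ hden]
          have h9 : 0 ≤ lam * (e - 1) := by nlinarith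
          nlinarith [mul_nonneg h9 (mul_nonneg hL (by linarith : (0:ℝ) ≤ e))]
        have h0mem : (0:ℕ) ∈ Finset.range 1 := by simp
        have hle := Finset.le_sup' (fun j => piNormKron π (zpar j)) h0mem
        calc piNormKron π (zperp 1) ≤ lam * ((e - 1) * piNormKron π (zpar 0)) := h1
          _ = lam * (e - 1) * piNormKron π (zpar 0) := by ring
          _ ≤ L * piNormKron π (zpar 0) :=
              mul_le_mul_of_nonneg_right hco (hpn _)
          _ ≤ L * ((Finset.range 1).sup' (Finset.nonempty_range_iff.mpr (by omega))
              fun j => piNormKron π (zpar j)) :=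
              mul_le_mul_of_nonneg_left hle hLnn
      · have hn1 : 1 ≤ n := by omega
        have ihn := ih hn1
        have h1 := hstep n
        have hne : (Finset.range (n+1)).Nonempty := Finset.nonempty_range_iff.mpr (by omega)
        set Mn1 := (Finset.range (n+1)).sup' hne (fun j => piNormKron π (zpar j)) with hMn1
        have hsn : piNormKron π (zpar n) ≤ Mn1 :=
          Finset.le_sup' (fun j => piNormKron π (zpar j)) (Finset.self_mem_range_succ n)
        have hmono : (Finset.range n).sup' (Finset.nonempty_range_iff.mpr (by omega))
            (fun j => piNormKron π (zpar j)) ≤ Mn1 := by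
          apply Finset.sup'_le
          intro j hj
          refine Finset.le_sup' (fun j => piNormKron π (zpar j)) ?_
          simp only [Finset.mem_range] at hj ⊢
          omega
        have hrn : piNormKron π (zperp n) ≤ L * Mn1 :=
          ihn.trans (mul_le_mul_of_nonneg_left hmono hLnn)
        have t1 : (e - 1) * piNormKron π (zpar n) + e * piNormKron π (zperp n) ≤
            (e - 1) * Mn1 + e * (L * Mn1) :=
          add_le_add (mul_le_mul_of_nonneg_left hsn (by linarith))
            (mul_le_mul_of_nonneg_left hrn (by linarith))
        calc piNormKron π (zperp (n+1)) ≤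
            lam * ((e - 1) * piNormKron π (zpar n) + e * piNormKron π (zperp n)) := h1
          _ ≤ lam * ((e - 1) * Mn1 + e * (L * Mn1)) := mul_le_mul_of_nonneg_left t1 hL
          _ = (lam * (e - 1) + lam * e * L) * Mn1 := by ring
          _ = L * Mn1 := by rw [hkey]
end

section
/- Let π be a probability vector on [N], let ℓ ≥ 0 and t > 0, and let H_1,…,H_N ∈ ℂ^{m×m} satisfy ‖H_i‖₂ ≤ ℓ for all i ∈ [N] and Σ_{i∈[N]} π_i H_i = 0. Then ‖ Σ_{i∈[N]} π_i exp(tH_i) ‖₂ ≤ exp(tℓ) − tℓ. -/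
open scoped BigOperators Kronecker ComplexOrder
open Matrix

/-- `π` is a stationary distribution of `P`: strictly positive entries, sums to 1, `πᵀ P = πᵀ`. -/
def IsStationaryDist {S : Type*} [Fintype S] (P : Matrix S S ℝ) (π : S → ℝ) : Prop :=
  (∀ i, 0 < π i) ∧ (∑ i, π i = 1) ∧ ∀ j, ∑ i, π i * P i j = π j

section Aux

open scoped Matrix.Norms.L2Operator

variable {𝕜 : Type*} [RCLike 𝕜] {m' n' : Type*} [Fintype m'] [Fintype n']
  [DecidableEq n'] [DecidableEq m']

private lemma sqrt_sum_eq (x : n' → 𝕜) :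
    Real.sqrt (∑ i, ‖x i‖ ^ 2) = ‖(EuclideanSpace.equiv n' 𝕜).symm x‖ := by
  rw [EuclideanSpace.norm_eq]; rfl

private lemma sqrt_sum_pos {x : n' → 𝕜} (hx : x ≠ 0) :
    0 < Real.sqrt (∑ j, ‖x j‖ ^ 2) := by
  rw [sqrt_sum_eq, norm_pos_iff]
  simpa using hx

private lemma ratio_le_norm (A : Matrix m' n' 𝕜) (x : n' → 𝕜) (hx : x ≠ 0) :
    Real.sqrt (∑ i, ‖(A *ᵥ x) i‖ ^ 2) / Real.sqrt (∑ j, ‖x j‖ ^ 2) ≤ ‖A‖ := by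
  rw [div_le_iff₀ (sqrt_sum_pos hx), sqrt_sum_eq, sqrt_sum_eq]
  exact A.l2_opNorm_mulVec _

private lemma matSpectralNorm_le_norm (A : Matrix m' n' 𝕜) : matSpectralNorm A ≤ ‖A‖ := by
  apply Real.sSup_le _ (norm_nonneg A)
  rintro r ⟨x, hx, rfl⟩
  exact ratio_le_norm A x hx

private lemma norm_le_matSpectralNorm [Nonempty n'] (A : Matrix m' n' 𝕜) :
    ‖A‖ ≤ matSpectralNorm A := by
  have hbdd : BddAbove {r : ℝ | ∃ x : n' → 𝕜, x ≠ 0 ∧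
      r = Real.sqrt (∑ i, ‖(A *ᵥ x) i‖ ^ 2) / Real.sqrt (∑ j, ‖x j‖ ^ 2)} :=
    ⟨‖A‖, by rintro r ⟨x, hx, rfl⟩; exact ratio_le_norm A x hx⟩
  have key : ∀ x : n' → 𝕜, x ≠ 0 →
      Real.sqrt (∑ i, ‖(A *ᵥ x) i‖ ^ 2) ≤ matSpectralNorm A * Real.sqrt (∑ j, ‖x j‖ ^ 2) := by
    intro x hx
    have hle := le_csSup hbdd ⟨x, hx, rfl⟩
    rw [div_le_iff₀ (sqrt_sum_pos hx)] at hle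
    exact hle
  have hone : (fun _ : n' => (1 : 𝕜)) ≠ 0 := by
    intro h
    have := congrFun h (Classical.arbitrary n')
    simp at this
  have hsnn : 0 ≤ matSpectralNorm A :=
    le_trans (by positivity) (le_csSup hbdd ⟨_, hone, rfl⟩)
  rw [l2_opNorm_def]
  apply ContinuousLinearMap.opNorm_le_bound _ hsnn
  intro y
  have hA : (toEuclideanLin (𝕜 := 𝕜) (m := m') (n := n')).trans
      LinearMap.toContinuousLinearMap A y = (EuclideanSpace.equiv m' 𝕜).symm
        (A *ᵥ ((EuclideanSpace.equiv n' 𝕜) y)) := rfl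
  rcases eq_or_ne y 0 with rfl | hy
  · simp
  · set x : n' → 𝕜 := (EuclideanSpace.equiv n' 𝕜) y with hxdef
    have hx : x ≠ 0 := by
      simpa [hxdef] using hy
    have h1 : ‖(toEuclideanLin (𝕜 := 𝕜) (m := m') (n := n')).trans
        LinearMap.toContinuousLinearMap A y‖ = Real.sqrt (∑ i, ‖(A *ᵥ x) i‖ ^ 2) := by
      rw [hA, ← sqrt_sum_eq]
    have h2 : ‖y‖ = Real.sqrt (∑ j, ‖x j‖ ^ 2) := by rw [sqrt_sum_eq]; rfl
    rw [h1, h2]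
    exact key x hx

private lemma core_exp_bound {m : ℕ} [NeZero m] (A : Matrix (Fin m) (Fin m) ℂ) {ℓ t : ℝ}
    (hA : ‖A‖ ≤ ℓ) (ht : 0 < t) :
    ‖NormedSpace.exp ((t : ℂ) • A) - (t : ℂ) • A‖ ≤ Real.exp (t * ℓ) - t * ℓ := by
  set B := (t : ℂ) • A with hB
  have hBn : ‖B‖ ≤ t * ℓ := by
    rw [hB, norm_smul]
    simp only [Complex.norm_real, Real.norm_eq_abs, abs_of_pos ht]
    exact mul_le_mul_of_nonneg_left hA ht.le
  set f : ℕ → Matrix (Fin m) (Fin m) ℂ := fun k => ((k.factorial : ℂ))⁻¹ • B ^ k with hf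
  have hfs : Summable f := NormedSpace.expSeries_summable' (𝕂 := ℂ) B
  have hexp : NormedSpace.exp B = ∑' k, f k := by rw [NormedSpace.exp_eq_tsum ℂ]
  have h1 : f 1 = B := by simp [hf]
  have hsplit : NormedSpace.exp B - B = ∑' n, if n = 1 then 0 else f n := by
    rw [hexp, hfs.tsum_eq_add_tsum_ite 1, h1]
    exact add_sub_cancel_left B _
  rw [hsplit]
  set v : ℕ → ℝ := fun n => (t * ℓ) ^ n / n.factorial with hv
  have hv1 : HasSum v (Real.exp (t * ℓ)) := by
    rw [Real.exp_eq_exp_ℝ]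
    exact NormedSpace.expSeries_div_hasSum_exp (t * ℓ)
  have hu : HasSum (fun n => if n = 1 then 0 else v n) (Real.exp (t * ℓ) - t * ℓ) := by
    have h2 : HasSum (fun n => if n = 1 then (t*ℓ) else 0) (t * ℓ) := hasSum_ite_eq 1 (t*ℓ)
    have := hv1.sub h2
    have e : (fun n => if n = 1 then 0 else v n) = fun b => v b - if b = 1 then t * ℓ else 0 := by
      funext n
      by_cases h : n = 1 <;> simp [h, hv]
    rw [e]; exact this
  apply tsum_of_norm_bounded hu
  intro n
  by_cases h : n = 1
  · simp [h]
  · simp only [h, if_false, hv]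
    rw [norm_smul]
    have hpow : ‖B ^ n‖ ≤ (t * ℓ) ^ n := by
      rcases Nat.eq_zero_or_pos n with rfl | hn
      · simp
      · exact le_trans (norm_pow_le' B hn) (pow_le_pow_left₀ (norm_nonneg B) hBn n)
    have hfac : ‖((n.factorial : ℂ))⁻¹‖ = ((n.factorial : ℝ))⁻¹ := by simp
    rw [hfac, div_eq_inv_mul]
    exact mul_le_mul_of_nonneg_left hpow (by positivity)

private lemma stmt_aux {N m : ℕ} [NeZero m] (π : Fin N → ℝ) (hπ : IsProbVec π)
    (ℓ t : ℝ) (ht : 0 < t)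
    (H : Fin N → Matrix (Fin m) (Fin m) ℂ)
    (hH : ∀ i, matSpectralNorm (H i) ≤ ℓ)
    (hmean : ∑ i, π i • H i = 0) :
    matSpectralNorm (∑ i, π i • mexp ((t : ℂ) • H i)) ≤ Real.exp (t * ℓ) - t * ℓ := by
  apply le_trans (matSpectralNorm_le_norm _)
  have hHn : ∀ i, ‖H i‖ ≤ ℓ := fun i => (norm_le_matSpectralNorm (H i)).trans (hH i)
  have hmexp : ∀ i, mexp ((t : ℂ) • H i) = NormedSpace.exp ((t : ℂ) • H i) := by
    intro i
    rw [NormedSpace.exp_eq_tsum ℂ]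
    rfl
  have hzero : ∑ i, π i • ((t : ℂ) • H i) = (0 : Matrix (Fin m) (Fin m) ℂ) := by
    have h : ∑ i, π i • ((t : ℂ) • H i) = (t : ℂ) • ∑ i, π i • H i := by
      rw [Finset.smul_sum]
      exact Finset.sum_congr rfl fun i _ => smul_comm (π i) ((t:ℂ)) (H i)
    rw [h, hmean, smul_zero]
  set D : Fin N → Matrix (Fin m) (Fin m) ℂ :=
    fun i => NormedSpace.exp ((t : ℂ) • H i) - (t : ℂ) • H i with hD
  have hre : ∑ i, π i • mexp ((t : ℂ) • H i) = ∑ i, π i • D i := by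
    have h1 : ∀ i ∈ Finset.univ, π i • mexp ((t : ℂ) • H i)
        = π i • D i + π i • ((t : ℂ) • H i) := by
      intro i _
      rw [hmexp i, ← smul_add, hD]
      simp
    rw [Finset.sum_congr rfl h1, Finset.sum_add_distrib, hzero, add_zero]
  rw [hre]
  have hDb : ∀ i, ‖D i‖ ≤ Real.exp (t * ℓ) - t * ℓ := fun i =>
    core_exp_bound (H i) (hHn i) ht
  calc ‖∑ i, π i • D i‖ ≤ ∑ i, ‖π i • D i‖ := norm_sum_le _ _
    _ = ∑ i, π i * ‖D i‖ := by
        refine Finset.sum_congr rfl fun i _ => ?_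
        rw [norm_smul, Real.norm_eq_abs, abs_of_nonneg (hπ.1 i)]
    _ ≤ ∑ i, π i * (Real.exp (t * ℓ) - t * ℓ) :=
        Finset.sum_le_sum fun i _ => mul_le_mul_of_nonneg_left (hDb i) (hπ.1 i)
    _ = Real.exp (t * ℓ) - t * ℓ := by
        rw [← Finset.sum_mul, hπ.2, one_mul]

end Aux

theorem stmt_18 {N m : ℕ} (π : Fin N → ℝ) (hπ : IsProbVec π)
    (ℓ t : ℝ) (hℓ : 0 ≤ ℓ) (ht : 0 < t)
    (H : Fin N → Matrix (Fin m) (Fin m) ℂ)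
    (hH : ∀ i, matSpectralNorm (H i) ≤ ℓ)
    (hmean : ∑ i, π i • H i = 0) :
    matSpectralNorm (∑ i, π i • mexp ((t : ℂ) • H i)) ≤ Real.exp (t * ℓ) - t * ℓ := by
  classical
  have hrhs : (0:ℝ) ≤ Real.exp (t * ℓ) - t * ℓ := by
    have := Real.add_one_le_exp (t * ℓ)
    linarith
  rcases Nat.eq_zero_or_pos m with rfl | hm
  · have h0 : matSpectralNorm (∑ i, π i • mexp ((t : ℂ) • H i)) = 0 := by
      unfold matSpectralNorm
      convert Real.sSup_empty using 2
      ext r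
      simp only [Set.mem_setOf_eq, Set.mem_empty_iff_false, iff_false, not_exists]
      rintro x ⟨hx, -⟩
      exact hx (funext fun j => j.elim0)
    rw [h0]; exact hrhs
  · have : NeZero m := ⟨hm.ne'⟩
    exact stmt_aux π hπ ℓ t ht H hH hmean
end
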